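/- arXiv:1805.01679 — 11 statements merged into one kernel-verified Lean document; each statement's English description precedes it below -/
import Mathlib

section
/- Let z = a + b·i with a ∈ ℝ and b > 0, and let x ∈ ℝ. Then the function t ↦ log|x − t| · (1/π)·b/((t − a)² + b²) is Lebesgue integrable on ℝ, and ∫_ℝ log|x − t| · (1/π)·b/((t − a)² + b²) dt = log|x − z|. (Equivalently: the balayage of the unit point mass δ_z onto ℝ is the measure with density (1/π)|Im z|/|x − z|² with respect to Lebesgue measure, and its logarithmic potential agrees with that of δ_z on ℝ.) -/
open MeasureTheory Real Set

/-! Auxiliary integrability lemmas for `log` and `log ∘ cos`. -/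

lemma aux_integrableOn_log_Ioo01 : IntegrableOn Real.log (Set.Ioo (0:ℝ) 1) := by
  have h : IntegrableOn (fun x : ℝ => -Real.log x) (Set.Ioc (0:ℝ) 1) := by
    apply intervalIntegral.integrableOn_deriv_of_nonneg (g := fun x : ℝ => x - x * Real.log x)
    · exact (continuous_id.sub Real.continuous_mul_log).continuousOn
    · intro y hy
      have hy0 : y ≠ 0 := ne_of_gt hy.1
      have h1 := (hasDerivAt_id y).sub (Real.hasDerivAt_mul_log hy0)
      rw [show (1:ℝ) - (Real.log y + 1) = -Real.log y by ring] at h1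
      exact h1
    · intro y hy
      have : Real.log y ≤ 0 := Real.log_nonpos hy.1.le hy.2.le
      linarith
  have h2 := (h.mono_set Set.Ioo_subset_Ioc_self).neg
  have h3 : Set.EqOn (-fun y : ℝ => -Real.log y) Real.log (Set.Ioo (0:ℝ) 1) :=
    fun y _ => by simp
  exact IntegrableOn.congr_fun h2 h3 measurableSet_Ioo

lemma aux_integrableOn_log : IntegrableOn Real.log (Set.Ioo (0:ℝ) (π/2)) := by
  have h2 : IntegrableOn Real.log (Set.Icc (1:ℝ) (π/2)) := by
    apply ContinuousOn.integrableOn_Icc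
    apply Real.continuousOn_log.mono
    intro y hy
    simp only [Set.mem_compl_iff, Set.mem_singleton_iff]
    have := hy.1
    intro h; rw [h] at this; linarith
  refine (aux_integrableOn_log_Ioo01.union h2).mono_set ?_
  intro y hy
  rcases lt_or_ge y 1 with h | h
  · exact Or.inl ⟨hy.1, h⟩
  · exact Or.inr ⟨h, hy.2.le⟩

lemma aux_integrableOn_log_sin :
    IntegrableOn (fun u => Real.log (Real.sin u)) (Set.Ioo (0:ℝ) (π/2)) := by
  have hmeas : AEStronglyMeasurable (fun u => Real.log (Real.sin u))
      (volume.restrict (Set.Ioo (0:ℝ) (π/2))) :=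
    (Real.measurable_log.comp Real.measurable_sin).aestronglyMeasurable
  have hg : IntegrableOn (fun u => |Real.log u| + Real.log (π/2)) (Set.Ioo (0:ℝ) (π/2)) :=
    aux_integrableOn_log.abs.add (integrableOn_const measure_Ioo_lt_top.ne)
  refine hg.integrable.mono' hmeas ?_
  filter_upwards [ae_restrict_mem measurableSet_Ioo] with u hu
  have h0 : 0 < u := hu.1
  have h1 : u ≤ π/2 := hu.2.le
  have hsinpos : 0 < Real.sin u :=
    Real.sin_pos_of_pos_of_lt_pi h0 (lt_of_lt_of_le hu.2 (by linarith [Real.pi_pos]))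
  have hle : Real.sin u ≤ u := (Real.sin_lt h0).le
  have hge : 2 / π * u ≤ Real.sin u := Real.mul_le_sin h0.le h1
  have hπ : (0:ℝ) < π := Real.pi_pos
  have hlog2pi : Real.log (2/π) = - Real.log (π/2) := by
    rw [← Real.log_inv]
    norm_num
  have hpi2 : (0:ℝ) ≤ Real.log (π/2) :=
    Real.log_nonneg (by nlinarith [Real.pi_gt_three])
  rw [Real.norm_eq_abs, abs_le]
  constructor
  · have hmono : Real.log (2/π * u) ≤ Real.log (Real.sin u) :=
      Real.log_le_log (by positivity) hge
    rw [Real.log_mul (by positivity) h0.ne', hlog2pi] at hmono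
    have habs : -|Real.log u| ≤ Real.log u := neg_abs_le _
    linarith
  · have hmono : Real.log (Real.sin u) ≤ Real.log u := Real.log_le_log hsinpos hle
    have habs : Real.log u ≤ |Real.log u| := le_abs_self _
    linarith

lemma aux_II_log_cos_base :
    IntervalIntegrable (fun θ => Real.log (Real.cos θ)) volume (-(π/2)) (π/2) := by
  have hπ : (0:ℝ) < π := Real.pi_pos
  have hpos : IntervalIntegrable (fun θ => Real.log (Real.cos θ)) volume 0 (π/2) := by
    have hsin : IntervalIntegrable (fun u => Real.log (Real.sin u)) volume 0 (π/2) := by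
      rw [intervalIntegrable_iff_integrableOn_Ioo_of_le (by positivity)]
      exact aux_integrableOn_log_sin
    have h3 := (hsin.comp_sub_left (π/2)).symm
    have h2 : (fun y => Real.log (Real.sin (π/2 - y))) = fun y => Real.log (Real.cos y) := by
      funext y; rw [Real.sin_pi_div_two_sub]
    rw [h2] at h3
    simpa using h3
  have hneg : IntervalIntegrable (fun θ => Real.log (Real.cos θ)) volume (-(π/2)) 0 := by
    have h3 := (IntervalIntegrable.iff_comp_neg (f := fun θ => Real.log (Real.cos θ))).mp hpos
    have h2 : (fun y => Real.log (Real.cos (-y))) = fun y => Real.log (Real.cos y) := by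
      funext y; rw [Real.cos_neg]
    rw [h2] at h3
    simpa using h3.symm
  exact hneg.trans hpos

lemma aux_logcos_periodic : Function.Periodic (fun θ => Real.log (Real.cos θ)) π := by
  intro y
  simp only [Real.cos_add_pi, Real.log_neg_eq_log]

lemma aux_II_shift_pi {u v : ℝ}
    (h : IntervalIntegrable (fun θ => Real.log (Real.cos θ)) volume u v) :
    IntervalIntegrable (fun θ => Real.log (Real.cos θ)) volume (u + π) (v + π) := by
  have h2 := h.comp_sub_right π
  have h3 : (fun y => Real.log (Real.cos (y - π))) = fun y => Real.log (Real.cos y) := by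
    funext y
    have := aux_logcos_periodic (y - π)
    simpa using this.symm
  rwa [h3] at h2

lemma aux_II_shift_negpi {u v : ℝ}
    (h : IntervalIntegrable (fun θ => Real.log (Real.cos θ)) volume u v) :
    IntervalIntegrable (fun θ => Real.log (Real.cos θ)) volume (u - π) (v - π) := by
  have h2 := h.comp_add_right π
  have h3 : (fun y => Real.log (Real.cos (y + π))) = fun y => Real.log (Real.cos y) := by
    funext y
    exact aux_logcos_periodic y
  rwa [h3] at h2

lemma aux_II_log_cos_big :
    IntervalIntegrable (fun θ => Real.log (Real.cos θ)) volume (-(5*π/2)) (5*π/2) := by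
  have B0 := aux_II_log_cos_base
  have B1 := aux_II_shift_pi B0
  rw [show -(π/2) + π = π/2 by ring, show π/2 + π = 3*π/2 by ring] at B1
  have B2 := aux_II_shift_pi B1
  rw [show π/2 + π = 3*π/2 by ring, show 3*π/2 + π = 5*π/2 by ring] at B2
  have Bm1 := aux_II_shift_negpi B0
  rw [show -(π/2) - π = -(3*π/2) by ring, show π/2 - π = -(π/2) by ring] at Bm1
  have Bm2 := aux_II_shift_negpi Bm1
  rw [show -(3*π/2) - π = -(5*π/2) by ring, show -(π/2) - π = -(3*π/2) by ring] at Bm2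
  exact (((Bm2.trans Bm1).trans B0).trans B1).trans B2

lemma aux_II_log_cos_sub (φ : ℝ) (h1 : -π < φ) (h2 : φ ≤ π) :
    IntervalIntegrable (fun θ => Real.log (Real.cos (θ - φ))) volume (-(π/2)) (π/2) := by
  have hπ : (0:ℝ) < π := Real.pi_pos
  have hsub : IntervalIntegrable (fun θ => Real.log (Real.cos θ)) volume
      (-(π/2) - φ) (π/2 - φ) := by
    apply aux_II_log_cos_big.mono_set
    rw [Set.uIcc_of_le (by linarith), Set.uIcc_of_le (by linarith)]
    exact Set.Icc_subset_Icc (by linarith) (by linarith)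
  have h3 := hsub.comp_sub_right φ
  rwa [show -(π/2) - φ + φ = -(π/2) by ring, show π/2 - φ + φ = π/2 by ring] at h3

/-- **Balayage of a point mass onto the real axis.**
For `z = a + b i` with `b > 0` and `x ∈ ℝ`, the function
`t ↦ log |x − t| · (1/π) · b / ((t − a)² + b²)` is Lebesgue integrable on `ℝ` and its
integral equals `log |x − z|`; i.e. the balayage of `δ_z` onto `ℝ` is the measure with
density `(1/π)|Im z|/|x − z|²`, and its logarithmic potential agrees with that of `δ_z`
on `ℝ`. -/
theorem balayage_point_mass_real_axis
    (a b : ℝ) (hb : 0 < b) (z : ℂ) (hz : z = (a : ℂ) + (b : ℂ) * Complex.I) (x : ℝ) :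
    Integrable (fun t : ℝ =>
      Real.log |x - t| * ((1 / π) * b / ((t - a) ^ 2 + b ^ 2))) ∧
    (∫ t : ℝ, Real.log |x - t| * ((1 / π) * b / ((t - a) ^ 2 + b ^ 2)))
      = Real.log ‖(x : ℂ) - z‖ := by
  subst hz
  have hπ : (0:ℝ) < π := Real.pi_pos
  set w : ℂ := (x : ℂ) - ((a : ℂ) + (b : ℂ) * Complex.I) with hw
  have hw_re : w.re = x - a := by simp [hw]
  have hw_im : w.im = -b := by simp [hw]
  have hw0 : w ≠ 0 := by
    intro h
    rw [h] at hw_im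
    simp at hw_im
    linarith
  set R : ℝ := ‖w‖ with hR
  have hR0 : 0 < R := norm_pos_iff.mpr hw0
  set φ : ℝ := Complex.arg w with hφ
  have hφ1 : -π < φ := Complex.neg_pi_lt_arg w
  have hφ2 : φ ≤ π := Complex.arg_le_pi w
  have hRcos : R * Real.cos φ = x - a := by
    rw [hφ, Complex.cos_arg hw0, hw_re, ← hR]
    field_simp
  have hRsin : R * Real.sin φ = -b := by
    rw [hφ, Complex.sin_arg, hw_im, ← hR]
    field_simp
  have hkey : ∀ θ : ℝ, R * Real.cos (θ - φ) = (x - a) * Real.cos θ - b * Real.sin θ := by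
    intro θ
    rw [Real.cos_sub]
    linear_combination Real.cos θ * hRcos + Real.sin θ * hRsin
  set I : Set ℝ := Set.Ioo (-(π/2)) (π/2) with hI
  have hIm : MeasurableSet I := measurableSet_Ioo
  set fmap : ℝ → ℝ := fun θ => a + b * Real.tan θ with hfmap
  set fder : ℝ → ℝ := fun θ => b / Real.cos θ ^ 2 with hfder
  have hcosθ : ∀ θ ∈ I, 0 < Real.cos θ := fun θ hθ => Real.cos_pos_of_mem_Ioo hθ
  have hder : ∀ θ ∈ I, HasDerivWithinAt fmap (fder θ) I θ := by
    intro θ hθ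
    have hc := hcosθ θ hθ
    have h1 := ((Real.hasDerivAt_tan hc.ne').const_mul b).const_add a
    have h2 : b * (1 / Real.cos θ ^ 2) = fder θ := by rw [hfder]; ring
    rw [h2] at h1
    exact h1.hasDerivWithinAt
  have hinj : Set.InjOn fmap I := by
    intro p hp q hq hpq
    simp only [hfmap] at hpq
    have h' : b * Real.tan p = b * Real.tan q := by linarith
    exact Real.strictMonoOn_tan.injOn hp hq (mul_left_cancel₀ hb.ne' h')
  have himg : fmap '' I = Set.univ := by
    apply Set.eq_univ_of_forall
    intro y
    refine ⟨Real.arctan ((y - a) / b), Real.arctan_mem_Ioo _, ?_⟩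
    simp only [hfmap, Real.tan_arctan]
    field_simp
    ring
  set g : ℝ → ℝ := fun t => Real.log |x - t| * ((1 / π) * b / ((t - a) ^ 2 + b ^ 2)) with hg
  set G : ℝ → ℝ := fun θ => (1/π) * Real.log |x - a - b * Real.tan θ| with hG
  have hEqOn : Set.EqOn (fun θ => |fder θ| • g (fmap θ)) G I := by
    intro θ hθ
    have hc := hcosθ θ hθ
    have hc2 : Real.cos θ ^ 2 ≠ 0 := by positivity
    simp only [hfder, hfmap, hg, hG, smul_eq_mul]
    rw [abs_of_pos (by positivity : (0:ℝ) < b / Real.cos θ ^ 2)]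
    rw [show x - (a + b * Real.tan θ) = x - a - b * Real.tan θ by ring]
    rw [show a + b * Real.tan θ - a = b * Real.tan θ by ring]
    have hD : (b * Real.tan θ) ^ 2 + b ^ 2 = b ^ 2 / Real.cos θ ^ 2 := by
      rw [Real.tan_eq_sin_div_cos]
      field_simp
      nlinarith [Real.sin_sq_add_cos_sq θ]
    rw [hD]
    field_simp
  -- integrability of the θ-side integrand
  set A : ℝ → ℝ := fun θ => Real.log (Real.cos (θ - φ)) with hA
  set C : ℝ → ℝ := fun θ => Real.log (Real.cos θ) with hC
  have hAint : IntegrableOn A I := by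
    have := aux_II_log_cos_sub φ hφ1 hφ2
    rw [intervalIntegrable_iff_integrableOn_Ioo_of_le (by linarith)] at this
    exact this
  have hCint : IntegrableOn C I := by
    have := aux_II_log_cos_base
    rw [intervalIntegrable_iff_integrableOn_Ioo_of_le (by linarith)] at this
    exact this
  have hconst : IntegrableOn (fun _ : ℝ => Real.log R) I :=
    integrableOn_const measure_Ioo_lt_top.ne
  -- a.e. nonvanishing of cos (θ - φ)
  have hae : ∀ᵐ θ ∂(volume.restrict I), Real.cos (θ - φ) ≠ 0 := by
    have hcnt : Set.Countable {θ : ℝ | Real.cos (θ - φ) = 0} := by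
      have hsub : {θ : ℝ | Real.cos (θ - φ) = 0} ⊆
          Set.range (fun k : ℤ => (2 * (k:ℝ) + 1) * π / 2 + φ) := by
        intro θ hθ
        rcases Real.cos_eq_zero_iff.mp hθ with ⟨k, hk⟩
        exact ⟨k, by linarith⟩
      exact (Set.countable_range _).mono hsub
    have hnull : volume {θ : ℝ | Real.cos (θ - φ) = 0} = 0 := hcnt.measure_zero _
    have h1 : ∀ᵐ θ : ℝ, Real.cos (θ - φ) ≠ 0 := by
      rw [ae_iff]
      simpa using hnull
    exact ae_restrict_of_ae h1
  -- the main pointwise identity (a.e. on I)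
  have hmain : (fun θ => Real.log |x - a - b * Real.tan θ|)
      =ᵐ[volume.restrict I] fun θ => Real.log R + (A θ - C θ) := by
    filter_upwards [ae_restrict_mem hIm, hae] with θ hθ hcosne
    have hc := hcosθ θ hθ
    have h1 : x - a - b * Real.tan θ = R * Real.cos (θ - φ) / Real.cos θ := by
      rw [Real.tan_eq_sin_div_cos, hkey θ]
      field_simp
    rw [h1, Real.log_abs, Real.log_div (mul_ne_zero hR0.ne' hcosne) hc.ne',
      Real.log_mul hR0.ne' hcosne]
    simp only [hA, hC]
    ring
  have hGint : IntegrableOn G I := by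
    have hRHS : IntegrableOn (fun θ => Real.log R + (A θ - C θ)) I :=
      hconst.add (hAint.sub hCint)
    have h2 : IntegrableOn (fun θ => Real.log |x - a - b * Real.tan θ|) I :=
      (Integrable.congr hRHS hmain.symm)
    exact h2.const_mul (1/π)
  -- value of the θ-side integral
  have hAC : ∫ θ in I, A θ = ∫ θ in I, C θ := by
    have e1 : ∫ θ in I, A θ = ∫ θ in (-(π/2))..(π/2), A θ := by
      rw [intervalIntegral.integral_of_le (by linarith), hI,
        ← MeasureTheory.integral_Ioc_eq_integral_Ioo]
    have e2 : ∫ θ in I, C θ = ∫ θ in (-(π/2))..(π/2), C θ := by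
      rw [intervalIntegral.integral_of_le (by linarith), hI,
        ← MeasureTheory.integral_Ioc_eq_integral_Ioo]
    rw [e1, e2]
    have e3 : ∫ θ in (-(π/2))..(π/2), A θ
        = ∫ u in (-(π/2) - φ)..(π/2 - φ), Real.log (Real.cos u) := by
      simp only [hA]
      exact intervalIntegral.integral_comp_sub_right (fun u => Real.log (Real.cos u)) φ
    rw [e3]
    have e4 := aux_logcos_periodic.intervalIntegral_add_eq (-(π/2) - φ) (-(π/2))
    rw [show -(π/2) - φ + π = π/2 - φ by ring, show -(π/2) + π = π/2 by ring] at e4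
    rw [e4]
  have hvolI : (volume I).toReal = π := by
    rw [hI, Real.volume_Ioo]
    rw [show π/2 - -(π/2) = π by ring]
    exact ENNReal.toReal_ofReal hπ.le
  have hval : ∫ θ in I, G θ = Real.log R := by
    simp only [hG]
    rw [MeasureTheory.integral_const_mul]
    rw [integral_congr_ae hmain]
    have hACint : IntegrableOn (fun θ => A θ - C θ) I := by
      have := hAint.sub hCint
      exact this
    rw [integral_add hconst hACint, integral_sub hAint hCint, hAC,
      setIntegral_const, measureReal_def, hvolI]
    field_simp
    ring
  constructor
  · have h1 : IntegrableOn g (fmap '' I) := by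
      rw [integrableOn_image_iff_integrableOn_abs_deriv_smul hIm hder hinj]
      exact hGint.congr_fun hEqOn.symm hIm
    rw [himg] at h1
    rw [← integrableOn_univ]
    exact h1
  · have h1 : ∫ t in fmap '' I, g t = ∫ θ in I, |fder θ| • g (fmap θ) :=
      integral_image_eq_integral_abs_deriv_smul hIm hder hinj g
    rw [himg] at h1
    rw [setIntegral_univ] at h1
    calc (∫ t : ℝ, Real.log |x - t| * ((1 / π) * b / ((t - a) ^ 2 + b ^ 2)))
        = ∫ θ in I, |fder θ| • g (fmap θ) := h1
      _ = ∫ θ in I, G θ := setIntegral_congr_fun hIm hEqOn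
      _ = Real.log R := hval
end

section
/- Let β₁, β₂ > 0, z₁ = −1 + β₁·i, z₂ = 1 + β₂·i, and for γ ∈ (0,1) let Q_γ(x) = log|x − z₁| − γ log|x − z₂| for x ∈ ℝ. Then there exists Γ₀ ∈ (0,1) such that for every γ ∈ (Γ₀, 1), the function Q_γ has two local minima on ℝ: one local minimum point lies in (−∞, −1) and the other lies in (1, +∞). Moreover, Q_γ is strictly increasing on [−1, 1]. -/
open MeasureTheory Real Set

private lemma slope_right_aux {f : ℝ → ℝ} {a d M : ℝ} (h : HasDerivAt f d a) (hd : d < 0)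
    (hM : a < M) : ∃ y ∈ Ioo a M, f y < f a := by
  have hs := hasDerivAt_iff_tendsto_slope.mp h
  have h1 : ∀ᶠ y in nhdsWithin a {a}ᶜ, slope f a y < 0 :=
    hs.eventually_lt tendsto_const_nhds hd
  have hsub : Ioi a ⊆ {a}ᶜ := fun y hy => Set.mem_compl_singleton_iff.mpr (ne_of_gt hy)
  have h1' : ∀ᶠ y in nhdsWithin a (Ioi a), slope f a y < 0 :=
    h1.filter_mono (nhdsWithin_mono a hsub)
  have h2 : Ioo a M ∈ nhdsWithin a (Ioi a) := Ioo_mem_nhdsGT_of_mem ⟨le_refl a, hM⟩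
  have h2' : ∀ᶠ y in nhdsWithin a (Ioi a), y ∈ Ioo a M := Filter.eventually_of_mem h2 fun y hy => hy
  obtain ⟨y, hsl, hyIoo⟩ := (h1'.and h2').exists
  refine ⟨y, hyIoo, ?_⟩
  rw [slope_def_field] at hsl
  by_contra hcon
  push_neg at hcon
  have : 0 ≤ (f y - f a) / (y - a) :=
    div_nonneg (by linarith) (by linarith [hyIoo.1])
  linarith

private lemma slope_left_aux {f : ℝ → ℝ} {b d M : ℝ} (h : HasDerivAt f d b) (hd : 0 < d)
    (hM : M < b) : ∃ y ∈ Ioo M b, f y < f b := by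
  have hs := hasDerivAt_iff_tendsto_slope.mp h
  have h1 : ∀ᶠ y in nhdsWithin b {b}ᶜ, 0 < slope f b y :=
    Filter.Tendsto.eventually_lt tendsto_const_nhds hs hd
  have hsub : Iio b ⊆ {b}ᶜ := fun y hy => Set.mem_compl_singleton_iff.mpr (ne_of_lt hy)
  have h1' : ∀ᶠ y in nhdsWithin b (Iio b), 0 < slope f b y :=
    h1.filter_mono (nhdsWithin_mono b hsub)
  have h2 : Ioo M b ∈ nhdsWithin b (Iio b) := Ioo_mem_nhdsLT_of_mem ⟨hM, le_refl b⟩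
  have h2' : ∀ᶠ y in nhdsWithin b (Iio b), y ∈ Ioo M b := Filter.eventually_of_mem h2 fun y hy => hy
  obtain ⟨y, hsl, hyIoo⟩ := (h1'.and h2').exists
  refine ⟨y, hyIoo, ?_⟩
  rw [slope_def_field] at hsl
  by_contra hcon
  push_neg at hcon
  have : (f y - f b) / (y - b) ≤ 0 :=
    div_nonpos_of_nonneg_of_nonpos (by linarith) (by linarith [hyIoo.2])
  linarith

private lemma exists_isLocalMin_aux {f : ℝ → ℝ} (hf : Continuous f) {a b y : ℝ}
    (hy : y ∈ Ioo a b) (hya : f y < f a) (hyb : f y < f b) :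
    ∃ c ∈ Ioo a b, IsLocalMin f c := by
  have hab : a ≤ b := le_of_lt (hy.1.trans hy.2)
  obtain ⟨c, hc, hmin⟩ := isCompact_Icc.exists_isMinOn (nonempty_Icc.mpr hab) hf.continuousOn
  have hcy : f c ≤ f y := hmin (Ioo_subset_Icc_self hy)
  have hca : a < c := lt_of_le_of_ne hc.1 (by rintro rfl; linarith)
  have hcb : c < b := lt_of_le_of_ne hc.2 (by rintro rfl; linarith)
  exact ⟨c, ⟨hca, hcb⟩, hmin.isLocalMin (Icc_mem_nhds hca hcb)⟩

private lemma lb_right_aux (β₁ β₂ γ : ℝ) (hγ0 : 0 ≤ γ) (hγ1 : γ ≤ 1) {x : ℝ}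
    (hx : 2 ≤ x) (hxb : β₂ ^ 2 ≤ 4 * x) :
    (1 - γ) * Real.log (x - 1) ≤
      Real.log ((x + 1) ^ 2 + β₁ ^ 2) / 2 - γ * (Real.log ((x - 1) ^ 2 + β₂ ^ 2) / 2) := by
  have hB0 : (0 : ℝ) < (x - 1) ^ 2 + β₂ ^ 2 := by nlinarith [sq_nonneg β₂]
  have hAB : (x - 1) ^ 2 + β₂ ^ 2 ≤ (x + 1) ^ 2 + β₁ ^ 2 := by nlinarith [sq_nonneg β₁]
  have h1 : Real.log ((x - 1) ^ 2 + β₂ ^ 2) ≤ Real.log ((x + 1) ^ 2 + β₁ ^ 2) :=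
    Real.log_le_log hB0 hAB
  have h2 : 2 * Real.log (x - 1) ≤ Real.log ((x - 1) ^ 2 + β₂ ^ 2) := by
    have e : Real.log ((x - 1) ^ 2) = 2 * Real.log (x - 1) := by
      rw [Real.log_pow]; norm_num
    rw [← e]
    exact Real.log_le_log (by nlinarith) (by nlinarith [sq_nonneg β₂])
  have h3 : 0 ≤ Real.log (x - 1) := Real.log_nonneg (by linarith)
  have h4 : 0 ≤ (1 - γ) * (Real.log ((x - 1) ^ 2 + β₂ ^ 2) - 2 * Real.log (x - 1)) :=
    mul_nonneg (by linarith) (by linarith)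
  linarith

private lemma lb_left_aux (β₁ β₂ γ : ℝ) (hβ₂ : 0 ≤ β₂) (hγ0 : 0 ≤ γ) (hγ1 : γ ≤ 1) {x : ℝ}
    (hx : x ≤ -3) (hxb : β₂ ≤ 1 - x) :
    (1 - γ) * Real.log (1 - x) - 3 / 2 ≤
      Real.log ((x + 1) ^ 2 + β₁ ^ 2) / 2 - γ * (Real.log ((x - 1) ^ 2 + β₂ ^ 2) / 2) := by
  have hA0 : (0 : ℝ) < (x + 1) ^ 2 + β₁ ^ 2 := by
    nlinarith [mul_nonneg (by linarith : (0:ℝ) ≤ -(x+3)) (by linarith : (0:ℝ) ≤ -(x-1)),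
      sq_nonneg β₁]
  have hB0 : (0 : ℝ) < (x - 1) ^ 2 + β₂ ^ 2 := by nlinarith [sq_nonneg β₂]
  have hb2 : β₂ ^ 2 ≤ (1 - x) ^ 2 := by nlinarith
  have hsq : (1 - x) ^ 2 ≤ 4 * (x + 1) ^ 2 := by
    nlinarith [mul_nonneg (by linarith : (0:ℝ) ≤ -(3*x+1)) (by linarith : (0:ℝ) ≤ -(x+3))]
  have hBA : (x - 1) ^ 2 + β₂ ^ 2 ≤ 8 * ((x + 1) ^ 2 + β₁ ^ 2) := by
    nlinarith [sq_nonneg β₁]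
  have hlog8 : Real.log 8 ≤ 3 := by
    have e : (8 : ℝ) = 2 ^ 3 := by norm_num
    rw [e, Real.log_pow]
    push_cast
    nlinarith [Real.log_two_lt_d9]
  have h1 : Real.log ((x - 1) ^ 2 + β₂ ^ 2) ≤ Real.log 8 + Real.log ((x + 1) ^ 2 + β₁ ^ 2) := by
    have := Real.log_le_log hB0 hBA
    rwa [Real.log_mul (by norm_num) (ne_of_gt hA0)] at this
  have h2 : 2 * Real.log (1 - x) ≤ Real.log ((x - 1) ^ 2 + β₂ ^ 2) := by
    have e : Real.log ((1 - x) ^ 2) = 2 * Real.log (1 - x) := by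
      rw [Real.log_pow]; norm_num
    rw [← e]
    exact Real.log_le_log (by nlinarith) (by nlinarith [sq_nonneg β₂])
  have h3 : 0 ≤ Real.log (1 - x) := Real.log_nonneg (by linarith)
  have h4 : 0 ≤ (1 - γ) * (Real.log ((x - 1) ^ 2 + β₂ ^ 2) - 2 * Real.log (1 - x)) :=
    mul_nonneg (by linarith) (by linarith)
  linarith

/-- **Two minima of the external field created by an attractor/repellent pair.**
For `z₁ = −1 + β₁ i`, `z₂ = 1 + β₂ i` with `β₁, β₂ > 0` and
`Q_γ(x) = log |x − z₁| − γ log |x − z₂|`, there is `Γ₀ ∈ (0,1)` such that for each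
`γ ∈ (Γ₀, 1)` the field `Q_γ` has two local minima on `ℝ`, one in `(−∞, −1)` and the
other in `(1, ∞)`; moreover `Q_γ` is strictly increasing on `[−1, 1]`. -/
theorem external_field_two_minima
    (β₁ β₂ : ℝ) (hβ₁ : 0 < β₁) (hβ₂ : 0 < β₂)
    (z₁ z₂ : ℂ) (hz₁ : z₁ = -1 + (β₁ : ℂ) * Complex.I)
    (hz₂ : z₂ = 1 + (β₂ : ℂ) * Complex.I)
    (Q : ℝ → ℝ → ℝ)
    (hQ : ∀ γ x, Q γ x = Real.log ‖(x : ℂ) - z₁‖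
      - γ * Real.log ‖(x : ℂ) - z₂‖) :
    ∃ Γ₀ ∈ Ioo (0 : ℝ) 1, ∀ γ ∈ Ioo Γ₀ 1,
      (∃ m₁ ∈ Iio (-1 : ℝ), ∃ m₂ ∈ Ioi (1 : ℝ),
        IsLocalMin (Q γ) m₁ ∧ IsLocalMin (Q γ) m₂) ∧
      StrictMonoOn (Q γ) (Icc (-1 : ℝ) 1) := by
  have hA : ∀ x : ℝ, (0 : ℝ) < (x + 1) ^ 2 + β₁ ^ 2 := fun x => by positivity
  have hB : ∀ x : ℝ, (0 : ℝ) < (x - 1) ^ 2 + β₂ ^ 2 := fun x => by positivity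
  -- rewrite Q in real terms
  have hQ2 : ∀ γ x, Q γ x =
      Real.log ((x + 1) ^ 2 + β₁ ^ 2) / 2 - γ * (Real.log ((x - 1) ^ 2 + β₂ ^ 2) / 2) := by
    intro γ x
    rw [hQ γ x]
    have e1 : ‖(x : ℂ) - z₁‖ = Real.sqrt ((x + 1) ^ 2 + β₁ ^ 2) := by
      rw [hz₁, Complex.norm_def, Complex.normSq_apply]
      congr 1
      simp
      ring
    have e2 : ‖(x : ℂ) - z₂‖ = Real.sqrt ((x - 1) ^ 2 + β₂ ^ 2) := by
      rw [hz₂, Complex.norm_def, Complex.normSq_apply]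
      congr 1
      simp
      ring
    rw [e1, e2, Real.log_sqrt (le_of_lt (hA x)), Real.log_sqrt (le_of_lt (hB x))]
  -- derivative of Q γ
  have hQd : ∀ γ x, HasDerivAt (Q γ)
      ((x + 1) / ((x + 1) ^ 2 + β₁ ^ 2) - γ * ((x - 1) / ((x - 1) ^ 2 + β₂ ^ 2))) x := by
    intro γ x
    have hA' : HasDerivAt (fun x : ℝ => (x + 1) ^ 2 + β₁ ^ 2) (2 * (x + 1)) x := by
      have h := (((hasDerivAt_id x).add_const (1 : ℝ)).pow 2).add_const (β₁ ^ 2)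
      refine h.congr_deriv ?_
      simp [id_eq]
    have hB' : HasDerivAt (fun x : ℝ => (x - 1) ^ 2 + β₂ ^ 2) (2 * (x - 1)) x := by
      have h := (((hasDerivAt_id x).sub_const (1 : ℝ)).pow 2).add_const (β₂ ^ 2)
      refine h.congr_deriv ?_
      simp [id_eq]
    have h1 := (Real.hasDerivAt_log (ne_of_gt (hA x))).comp x hA'
    have h2 := (Real.hasDerivAt_log (ne_of_gt (hB x))).comp x hB'
    have h3 := (h1.div_const 2).sub ((h2.div_const 2).const_mul γ)
    have hfun : Q γ = fun x =>
        Real.log ((x + 1) ^ 2 + β₁ ^ 2) / 2 - γ * (Real.log ((x - 1) ^ 2 + β₂ ^ 2) / 2) :=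
      funext (hQ2 γ)
    rw [hfun]
    refine h3.congr_deriv ?_
    field_simp
  have hcont : ∀ γ : ℝ, Continuous (Q γ) := by
    intro γ
    have hdiff : Differentiable ℝ (Q γ) := fun x => (hQd γ x).differentiableAt
    exact hdiff.continuous
  -- strict monotonicity on [-1,1] for any γ > 0
  have hmono : ∀ γ : ℝ, 0 < γ → StrictMonoOn (Q γ) (Icc (-1 : ℝ) 1) := by
    intro γ hγ
    apply strictMonoOn_of_deriv_pos (convex_Icc _ _) (hcont γ).continuousOn
    intro x hx
    rw [interior_Icc] at hx
    rw [(hQd γ x).deriv]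
    have h1 : 0 < (x + 1) / ((x + 1) ^ 2 + β₁ ^ 2) := div_pos (by linarith [hx.1]) (hA x)
    have h2 : γ * ((x - 1) / ((x - 1) ^ 2 + β₂ ^ 2)) < 0 :=
      mul_neg_of_pos_of_neg hγ (div_neg_of_neg_of_pos (by linarith [hx.2]) (hB x))
    linarith
  -- the point x₂ where the γ-term dominates
  set x₂ : ℝ := 2 + β₁ ^ 2 + β₂ ^ 2 with hx₂def
  have hx₂2 : 2 ≤ x₂ := by nlinarith [sq_nonneg β₁, sq_nonneg β₂]
  have hx₂1 : 1 < x₂ := by linarith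
  have hf₂pos : 0 < (x₂ + 1) / ((x₂ + 1) ^ 2 + β₁ ^ 2) := div_pos (by linarith) (hA x₂)
  have hg₂pos : 0 < (x₂ - 1) / ((x₂ - 1) ^ 2 + β₂ ^ 2) := div_pos (by linarith) (hB x₂)
  have hfg : (x₂ + 1) / ((x₂ + 1) ^ 2 + β₁ ^ 2) < (x₂ - 1) / ((x₂ - 1) ^ 2 + β₂ ^ 2) := by
    rw [div_lt_div_iff₀ (hA x₂) (hB x₂)]
    have hb1 : 0 ≤ β₁ ^ 2 := sq_nonneg β₁
    have hb2 : 0 ≤ β₂ ^ 2 := sq_nonneg β₂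
    nlinarith [mul_nonneg hb1 hb2, sq_nonneg (β₁ ^ 2), sq_nonneg (β₂ ^ 2)]
  set Γ₀ : ℝ := max (1 / 2)
    (((x₂ + 1) / ((x₂ + 1) ^ 2 + β₁ ^ 2)) / ((x₂ - 1) / ((x₂ - 1) ^ 2 + β₂ ^ 2))) with hΓ₀def
  have hΓ₀0 : 0 < Γ₀ := lt_of_lt_of_le (by norm_num) (le_max_left _ _)
  have hΓ₀1 : Γ₀ < 1 := max_lt (by norm_num) ((div_lt_one hg₂pos).mpr hfg)
  refine ⟨Γ₀, ⟨hΓ₀0, hΓ₀1⟩, ?_⟩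
  intro γ hγ
  obtain ⟨hγl, hγu⟩ := hγ
  have hγhalf : 1 / 2 < γ := lt_of_le_of_lt (le_max_left _ _) hγl
  have hγ0 : 0 < γ := by linarith
  have h1γ : 0 < 1 - γ := by linarith
  constructor
  · -- two local minima
    -- RIGHT minimum
    have hd₂ : (x₂ + 1) / ((x₂ + 1) ^ 2 + β₁ ^ 2)
        - γ * ((x₂ - 1) / ((x₂ - 1) ^ 2 + β₂ ^ 2)) < 0 := by
      have h1 : ((x₂ + 1) / ((x₂ + 1) ^ 2 + β₁ ^ 2)) / ((x₂ - 1) / ((x₂ - 1) ^ 2 + β₂ ^ 2)) < γ :=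
        lt_of_le_of_lt (le_max_right _ _) hγl
      rw [div_lt_iff₀ hg₂pos] at h1
      linarith
    set M : ℝ := max (max x₂ (β₂ ^ 2 / 4)) (1 + Real.exp ((Q γ x₂ + 1) / (1 - γ))) with hMdef
    have hMx : x₂ ≤ M := le_trans (le_max_left _ _) (le_max_left _ _)
    have hM2 : 2 ≤ M := le_trans hx₂2 hMx
    have hMb : β₂ ^ 2 ≤ 4 * M := by
      have := le_trans (le_max_right x₂ (β₂ ^ 2 / 4)) (le_max_left _ _ : max x₂ (β₂ ^ 2 / 4) ≤ M)
      linarith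
    have hMe : Real.exp ((Q γ x₂ + 1) / (1 - γ)) ≤ M - 1 := by
      have := le_max_right (max x₂ (β₂ ^ 2 / 4)) (1 + Real.exp ((Q γ x₂ + 1) / (1 - γ)))
      linarith
    have hM1 : (0 : ℝ) < M - 1 := lt_of_lt_of_le (Real.exp_pos _) hMe
    have hlogM : (Q γ x₂ + 1) / (1 - γ) ≤ Real.log (M - 1) :=
      (Real.le_log_iff_exp_le hM1).mpr hMe
    have hQMbig : Q γ x₂ + 1 ≤ (1 - γ) * Real.log (M - 1) := by
      rw [div_le_iff₀ h1γ] at hlogM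
      linarith
    have hlb := lb_right_aux β₁ β₂ γ (le_of_lt hγ0) (le_of_lt hγu) hM2 hMb
    have hMgt : Q γ x₂ < Q γ M := by
      rw [hQ2 γ M]
      linarith
    have hMne : x₂ < M := by
      rcases lt_or_eq_of_le hMx with h | h
      · exact h
      · exact absurd hMgt (by rw [h]; exact lt_irrefl _)
    obtain ⟨y₂, hy₂, hy₂v⟩ := slope_right_aux (hQd γ x₂) hd₂ hMne
    obtain ⟨m₂, hm₂, hmin₂⟩ :=
      exists_isLocalMin_aux (hcont γ) hy₂ hy₂v (lt_trans hy₂v hMgt)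
    -- LEFT minimum
    have hdL : 0 < ((-1 : ℝ) + 1) / (((-1 : ℝ) + 1) ^ 2 + β₁ ^ 2)
        - γ * (((-1 : ℝ) - 1) / (((-1 : ℝ) - 1) ^ 2 + β₂ ^ 2)) := by
      have e : ((-1 : ℝ) + 1) / (((-1 : ℝ) + 1) ^ 2 + β₁ ^ 2)
          - γ * (((-1 : ℝ) - 1) / (((-1 : ℝ) - 1) ^ 2 + β₂ ^ 2))
          = γ * (2 / (4 + β₂ ^ 2)) := by
        norm_num
        ring
      rw [e]
      positivity
    set ML : ℝ := min (min (-3) (1 - β₂))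
      (-(Real.exp ((Q γ (-1) + 5 / 2) / (1 - γ)))) with hMLdef
    have hML3 : ML ≤ -3 := le_trans (min_le_left _ _) (min_le_left _ _)
    have hMLβ : β₂ ≤ 1 - ML := by
      have h' : ML ≤ 1 - β₂ := le_trans (min_le_left _ _) (min_le_right _ _)
      linarith
    have hMLe : Real.exp ((Q γ (-1) + 5 / 2) / (1 - γ)) ≤ 1 - ML := by
      have := min_le_right (min (-3) (1 - β₂)) (-(Real.exp ((Q γ (-1) + 5 / 2) / (1 - γ))))
      linarith
    have hML1 : (0 : ℝ) < 1 - ML := lt_of_lt_of_le (Real.exp_pos _) hMLe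
    have hlogML : (Q γ (-1) + 5 / 2) / (1 - γ) ≤ Real.log (1 - ML) :=
      (Real.le_log_iff_exp_le hML1).mpr hMLe
    have hQMLbig : Q γ (-1) + 5 / 2 ≤ (1 - γ) * Real.log (1 - ML) := by
      rw [div_le_iff₀ h1γ] at hlogML
      linarith
    have hlbL := lb_left_aux β₁ β₂ γ (le_of_lt hβ₂) (le_of_lt hγ0) (le_of_lt hγu) hML3 hMLβ
    have hMLgt : Q γ (-1) < Q γ ML := by
      rw [hQ2 γ ML]
      linarith
    have hMLlt : ML < -1 := by linarith
    obtain ⟨y₁, hy₁, hy₁v⟩ := slope_left_aux (hQd γ (-1)) hdL hMLlt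
    obtain ⟨m₁, hm₁, hmin₁⟩ :=
      exists_isLocalMin_aux (hcont γ) hy₁ (lt_trans hy₁v hMLgt) hy₁v
    exact ⟨m₁, hm₁.2, m₂, lt_trans hx₂1 hm₂.1, hmin₁, hmin₂⟩
  · exact hmono γ hγ0
end

section
/- Let β₁, β₂ > 0 and for γ ∈ (0,1) define f_γ(x) = (1/π)(β₁/((x+1)² + β₁²) − γβ₂/((x−1)² + β₂²)) for x ∈ ℝ, and set Γ₁ = (1/(2β₁β₂))((β₁² + β₂² + 4) − √((β₁² + β₂² + 4)² − 4β₁²β₂²)). Then Γ₁ ∈ (0,1); for every γ ∈ (0, Γ₁), f_γ(x) > 0 for all x ∈ ℝ; and for every γ ∈ (Γ₁, 1), there exists x ∈ ℝ with f_γ(x) < 0. -/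
open Real Set

set_option maxHeartbeats 1600000 in
/-- **Threshold for positivity of the density of the signed equilibrium measure.**
With `f_γ(x) = (1/π)(β₁/((x+1)² + β₁²) − γ β₂/((x−1)² + β₂²))` and
`Γ₁ = (1/(2β₁β₂))((β₁² + β₂² + 4) − √((β₁² + β₂² + 4)² − 4β₁²β₂²))`, one has
`Γ₁ ∈ (0,1)`; for `γ ∈ (0, Γ₁)` the density `f_γ` is everywhere positive, while for
`γ ∈ (Γ₁, 1)` it is negative somewhere. -/
theorem signed_density_positivity_threshold
    (β₁ β₂ : ℝ) (hβ₁ : 0 < β₁) (hβ₂ : 0 < β₂)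
    (f : ℝ → ℝ → ℝ)
    (hf : ∀ γ x, f γ x = (1 / π) *
      (β₁ / ((x + 1) ^ 2 + β₁ ^ 2) - γ * β₂ / ((x - 1) ^ 2 + β₂ ^ 2)))
    (Γ₁ : ℝ)
    (hΓ₁ : Γ₁ = (1 / (2 * β₁ * β₂)) * ((β₁ ^ 2 + β₂ ^ 2 + 4)
      - Real.sqrt ((β₁ ^ 2 + β₂ ^ 2 + 4) ^ 2 - 4 * β₁ ^ 2 * β₂ ^ 2))) :
    Γ₁ ∈ Ioo (0 : ℝ) 1 ∧
    (∀ γ ∈ Ioo (0 : ℝ) Γ₁, ∀ x : ℝ, 0 < f γ x) ∧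
    (∀ γ ∈ Ioo Γ₁ (1 : ℝ), ∃ x : ℝ, f γ x < 0) := by
  have hπ : 0 < (1 : ℝ) / π := by positivity
  obtain ⟨S, hSdef⟩ : ∃ S : ℝ, S = β₁ ^ 2 + β₂ ^ 2 + 4 := ⟨_, rfl⟩
  obtain ⟨r, hrdef⟩ : ∃ r : ℝ, r = Real.sqrt (S ^ 2 - 4 * β₁ ^ 2 * β₂ ^ 2) := ⟨_, rfl⟩
  have hP : 0 < β₁ * β₂ := mul_pos hβ₁ hβ₂
  have hS2P : 2 * (β₁ * β₂) < S := by
    rw [hSdef]; nlinarith [sq_nonneg (β₁ - β₂)]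
  have hnn : 0 < S ^ 2 - 4 * β₁ ^ 2 * β₂ ^ 2 := by nlinarith
  have hr2 : r ^ 2 = S ^ 2 - 4 * β₁ ^ 2 * β₂ ^ 2 := by
    rw [hrdef]; exact Real.sq_sqrt hnn.le
  have hr0 : 0 < r := by rw [hrdef]; exact Real.sqrt_pos.mpr hnn
  have hrS : r < S := by nlinarith
  -- basic equation for Γ₁
  have hΓeq : 2 * (β₁ * β₂) * Γ₁ = S - r := by
    rw [hrdef, hSdef, hΓ₁]; field_simp
  have hΓpos : 0 < Γ₁ := by nlinarith
  -- Γ₁ satisfies the quadratic equation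
  have h4 : 4 * (β₁ * β₂) * (β₁ * β₂ * Γ₁ ^ 2 - S * Γ₁ + β₁ * β₂) = 0 := by
    linear_combination (2 * (β₁ * β₂) * Γ₁ - S - r) * hΓeq + hr2
  have hquad : β₁ * β₂ * Γ₁ ^ 2 - S * Γ₁ + β₁ * β₂ = 0 := by
    rcases mul_eq_zero.mp h4 with h | h
    · nlinarith
    · exact h
  have hΓ1lt : Γ₁ < 1 := by
    -- β₁β₂(1 - Γ₁²) = r Γ₁ > 0
    have hkey : β₁ * β₂ * (1 - Γ₁ ^ 2) = r * Γ₁ := by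
      linear_combination hquad - Γ₁ * hΓeq
    nlinarith [mul_pos hr0 hΓpos, hkey, hP, hΓpos]
  -- sign of X(γ) := β₁β₂(1+γ²) - Sγ
  have hid : ∀ γ : ℝ, Γ₁ * (β₁ * β₂ * (1 + γ ^ 2) - S * γ)
      = β₁ * β₂ * (Γ₁ - γ) * (1 - γ * Γ₁) := by
    intro γ; linear_combination γ * hquad
  have hXpos : ∀ γ : ℝ, 0 < γ → γ < Γ₁ → 0 < β₁ * β₂ * (1 + γ ^ 2) - S * γ := by
    intro γ h0 h1
    have h2 : 0 < 1 - γ * Γ₁ := by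
      have := mul_lt_mul_of_pos_left hΓ1lt h0
      have hgl1 : γ < 1 := h1.trans hΓ1lt
      nlinarith [this]
    have h3 : 0 < β₁ * β₂ * (Γ₁ - γ) * (1 - γ * Γ₁) := by
      apply mul_pos (mul_pos hP (by linarith)) h2
    have h5 : 0 < Γ₁ * (β₁ * β₂ * (1 + γ ^ 2) - S * γ) := by
      rw [hid γ]; exact h3
    exact (mul_pos_iff_of_pos_left hΓpos).mp h5
  have hXneg : ∀ γ : ℝ, Γ₁ < γ → γ < 1 → β₁ * β₂ * (1 + γ ^ 2) - S * γ < 0 := by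
    intro γ h0 h1
    have hγ0 : 0 < γ := hΓpos.trans h0
    have h2 : 0 < 1 - γ * Γ₁ := by
      have := mul_lt_mul_of_pos_left hΓ1lt hγ0
      nlinarith [this]
    have h3 : β₁ * β₂ * (Γ₁ - γ) * (1 - γ * Γ₁) < 0 := by
      apply mul_neg_of_neg_of_pos _ h2
      exact mul_neg_of_pos_of_neg hP (by linarith)
    have h5 : 0 < Γ₁ * (-(β₁ * β₂ * (1 + γ ^ 2) - S * γ)) := by
      rw [mul_neg, hid γ]; linarith
    have := (mul_pos_iff_of_pos_left hΓpos).mp h5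
    linarith
  refine ⟨⟨hΓpos, hΓ1lt⟩, ?_, ?_⟩
  · -- positivity for γ ∈ (0, Γ₁)
    rintro γ ⟨hγ0, hγΓ⟩ x
    have hX := hXpos γ hγ0 hγΓ
    -- β₁ - γ β₂ > 0, since Γ₁ < β₁/β₂
    have ha : 0 < β₁ - γ * β₂ := by
      by_contra h
      push_neg at h
      have ht0 : (0:ℝ) < β₁ / β₂ := by positivity
      have ht1 : β₁ / β₂ ≤ γ := by
        rw [div_le_iff₀ hβ₂]; linarith
      have hc := hXpos (β₁ / β₂) ht0 (lt_of_le_of_lt ht1 hγΓ)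
      have e : β₁ * β₂ * (1 + (β₁ / β₂) ^ 2) - S * (β₁ / β₂) = -4 * (β₁ / β₂) := by
        rw [hSdef]; field_simp; ring
      rw [e] at hc
      linarith
    -- the quadratic is positive everywhere
    have hidq : (β₁ - γ * β₂) * (β₁ * ((x - 1) ^ 2 + β₂ ^ 2)
        - γ * β₂ * ((x + 1) ^ 2 + β₁ ^ 2))
        = ((β₁ - γ * β₂) * x - (β₁ + γ * β₂)) ^ 2
          + β₁ * β₂ * (β₁ * β₂ * (1 + γ ^ 2) - S * γ) := by
      rw [hSdef]; ring
    have hsum : 0 < ((β₁ - γ * β₂) * x - (β₁ + γ * β₂)) ^ 2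
        + β₁ * β₂ * (β₁ * β₂ * (1 + γ ^ 2) - S * γ) :=
      add_pos_of_nonneg_of_pos (sq_nonneg _) (mul_pos hP hX)
    have hq : 0 < β₁ * ((x - 1) ^ 2 + β₂ ^ 2) - γ * β₂ * ((x + 1) ^ 2 + β₁ ^ 2) := by
      have h6 : 0 < (β₁ - γ * β₂) * (β₁ * ((x - 1) ^ 2 + β₂ ^ 2)
          - γ * β₂ * ((x + 1) ^ 2 + β₁ ^ 2)) := by rw [hidq]; exact hsum
      exact (mul_pos_iff_of_pos_left ha).mp h6
    rw [hf]
    have d1 : 0 < (x + 1) ^ 2 + β₁ ^ 2 := by positivity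
    have d2 : 0 < (x - 1) ^ 2 + β₂ ^ 2 := by positivity
    apply mul_pos hπ
    rw [sub_pos, div_lt_div_iff₀ d2 d1]
    linarith [hq]
  · -- negativity somewhere for γ ∈ (Γ₁, 1)
    rintro γ ⟨hγΓ, hγ1⟩
    have hγ0 : 0 < γ := lt_trans hΓpos hγΓ
    have hX := hXneg γ hγΓ hγ1
    have key : ∃ x : ℝ, β₁ * ((x - 1) ^ 2 + β₂ ^ 2) - γ * β₂ * ((x + 1) ^ 2 + β₁ ^ 2) < 0 := by
      rcases lt_or_ge 0 (β₁ - γ * β₂) with ha | ha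
      · refine ⟨(β₁ + γ * β₂) / (β₁ - γ * β₂), ?_⟩
        obtain ⟨x, hxdef⟩ : ∃ x : ℝ, x = (β₁ + γ * β₂) / (β₁ - γ * β₂) := ⟨_, rfl⟩
        rw [← hxdef]
        have hax : (β₁ - γ * β₂) * x = β₁ + γ * β₂ := by
          rw [hxdef]; field_simp
        have hq : (β₁ - γ * β₂) * (β₁ * ((x - 1) ^ 2 + β₂ ^ 2)
            - γ * β₂ * ((x + 1) ^ 2 + β₁ ^ 2))
            = ((β₁ - γ * β₂) * x - (β₁ + γ * β₂)) ^ 2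
              + β₁ * β₂ * (β₁ * β₂ * (1 + γ ^ 2) - S * γ) := by
          rw [hSdef]; ring
        have hz : ((β₁ - γ * β₂) * x - (β₁ + γ * β₂)) ^ 2 = 0 := by
          rw [hax]; ring
        have h6 : (β₁ - γ * β₂) * (-(β₁ * ((x - 1) ^ 2 + β₂ ^ 2)
            - γ * β₂ * ((x + 1) ^ 2 + β₁ ^ 2))) > 0 := by
          rw [mul_neg]
          have : 0 < -(β₁ * β₂ * (β₁ * β₂ * (1 + γ ^ 2) - S * γ)) := by
            have := mul_pos hP (neg_pos.mpr hX); linarith [this]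
          rw [hq, hz]; linarith
        have := (mul_pos_iff_of_pos_left ha).mp h6
        linarith
      · obtain ⟨C, hCdef⟩ : ∃ C : ℝ, C = β₁ * (1 + β₂ ^ 2) - γ * β₂ * (1 + β₁ ^ 2) :=
          ⟨_, rfl⟩
        have hB : 0 < β₁ + γ * β₂ := by positivity
        refine ⟨(|C| + 1) / (2 * (β₁ + γ * β₂)), ?_⟩
        obtain ⟨x, hxdef⟩ : ∃ x : ℝ, x = (|C| + 1) / (2 * (β₁ + γ * β₂)) := ⟨_, rfl⟩
        rw [← hxdef]
        have hx0 : 0 ≤ x := by rw [hxdef]; positivity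
        have h2Bx : 2 * (β₁ + γ * β₂) * x = |C| + 1 := by
          rw [hxdef]; field_simp
        have hqx : β₁ * ((x - 1) ^ 2 + β₂ ^ 2) - γ * β₂ * ((x + 1) ^ 2 + β₁ ^ 2)
            = (β₁ - γ * β₂) * x ^ 2 - 2 * (β₁ + γ * β₂) * x + C := by
          rw [hCdef]; ring
        have hax2 : (β₁ - γ * β₂) * x ^ 2 ≤ 0 :=
          mul_nonpos_of_nonpos_of_nonneg ha (sq_nonneg x)
        have hC : C ≤ |C| := le_abs_self C
        rw [hqx]; linarith
    obtain ⟨x, hq⟩ := key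
    refine ⟨x, ?_⟩
    rw [hf]
    have d1 : 0 < (x + 1) ^ 2 + β₁ ^ 2 := by positivity
    have d2 : 0 < (x - 1) ^ 2 + β₂ ^ 2 := by positivity
    apply mul_neg_of_pos_of_neg hπ
    rw [sub_neg, div_lt_div_iff₀ d1 d2]
    linarith [hq]
end

section
/- Let β₁, β₂ > 0, set Γ₁ = (1/(2β₁β₂))((β₁² + β₂² + 4) − √((β₁² + β₂² + 4)² − 4β₁²β₂²)), x₀ = (β₂² − β₁²)/4 and x₂ = x₀ + (1/4)√((β₂² − β₁²)² + 8(β₁² + β₂² + 2)). Then for γ = Γ₁, the function f_γ(x) = (1/π)(β₁/((x+1)² + β₁²) − γβ₂/((x−1)² + β₂²)) satisfies f_γ(x) ≥ 0 for all x ∈ ℝ, with equality if and only if x = x₂; i.e., the density of the signed equilibrium measure has a double real zero located exactly at x₂. -/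
open Real Set

/-- **Location of the double zero at the first transition.** At `γ = Γ₁`, the density
`f_γ(x) = (1/π)(β₁/((x+1)² + β₁²) − γ β₂/((x−1)² + β₂²))` of the signed equilibrium
measure is nonnegative on `ℝ` and vanishes exactly at the point
`x₂ = x₀ + (1/4)√((β₂² − β₁²)² + 8(β₁² + β₂² + 2))`, `x₀ = (β₂² − β₁²)/4`;
i.e. it has a double real zero located exactly at `x₂`. -/
theorem signed_density_double_zero_at_x₂
    (β₁ β₂ : ℝ) (hβ₁ : 0 < β₁) (hβ₂ : 0 < β₂)
    (Γ₁ : ℝ)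
    (hΓ₁ : Γ₁ = (1 / (2 * β₁ * β₂)) * ((β₁ ^ 2 + β₂ ^ 2 + 4)
      - Real.sqrt ((β₁ ^ 2 + β₂ ^ 2 + 4) ^ 2 - 4 * β₁ ^ 2 * β₂ ^ 2)))
    (x₀ x₂ : ℝ) (hx₀ : x₀ = (β₂ ^ 2 - β₁ ^ 2) / 4)
    (hx₂ : x₂ = x₀ + (1 / 4) *
      Real.sqrt ((β₂ ^ 2 - β₁ ^ 2) ^ 2 + 8 * (β₁ ^ 2 + β₂ ^ 2 + 2)))
    (f : ℝ → ℝ → ℝ)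
    (hf : ∀ γ x, f γ x = (1 / π) *
      (β₁ / ((x + 1) ^ 2 + β₁ ^ 2) - γ * β₂ / ((x - 1) ^ 2 + β₂ ^ 2))) :
    (∀ x : ℝ, 0 ≤ f Γ₁ x) ∧ (∀ x : ℝ, f Γ₁ x = 0 ↔ x = x₂) := by
  have hπ : 0 < π := Real.pi_pos
  have hKnn : 0 ≤ (β₁ ^ 2 + β₂ ^ 2 + 4) ^ 2 - 4 * β₁ ^ 2 * β₂ ^ 2 := by
    nlinarith [sq_nonneg (β₁ ^ 2 - β₂ ^ 2), sq_nonneg β₁, sq_nonneg β₂]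
  set D := Real.sqrt ((β₁ ^ 2 + β₂ ^ 2 + 4) ^ 2 - 4 * β₁ ^ 2 * β₂ ^ 2) with hDdef
  have hD2 : D ^ 2 = (β₁ ^ 2 + β₂ ^ 2 + 4) ^ 2 - 4 * β₁ ^ 2 * β₂ ^ 2 :=
    Real.sq_sqrt hKnn
  have hDnn : 0 ≤ D := Real.sqrt_nonneg _
  -- positivity of the leading coefficient
  have hA : 0 < 2 * β₁ ^ 2 - (β₁ ^ 2 + β₂ ^ 2 + 4) + D := by
    by_contra h
    push_neg at h
    nlinarith [hD2, hDnn, sq_nonneg β₁, mul_pos hβ₁ hβ₁]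
  -- closed form for x₂
  have hx₂' : x₂ = (β₂ ^ 2 - β₁ ^ 2 + D) / 4 := by
    rw [hx₂, hx₀, hDdef,
      show (β₂ ^ 2 - β₁ ^ 2) ^ 2 + 8 * (β₁ ^ 2 + β₂ ^ 2 + 2)
        = (β₁ ^ 2 + β₂ ^ 2 + 4) ^ 2 - 4 * β₁ ^ 2 * β₂ ^ 2 from by ring]
    ring
  -- closed form for Γ₁ β₂
  have hg : Γ₁ * β₂ * (2 * β₁) = (β₁ ^ 2 + β₂ ^ 2 + 4) - D := by
    rw [hΓ₁]
    field_simp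
  -- the key quadratic identity: the combined numerator is a perfect square
  have key : ∀ x : ℝ,
      2 * β₁ * (β₁ * ((x - 1) ^ 2 + β₂ ^ 2) - Γ₁ * β₂ * ((x + 1) ^ 2 + β₁ ^ 2))
        = (2 * β₁ ^ 2 - (β₁ ^ 2 + β₂ ^ 2 + 4) + D) * (x - x₂) ^ 2 := by
    intro x
    rw [hx₂']
    linear_combination (-((x + 1) ^ 2 + β₁ ^ 2)) * hg
      + ((8 * x - β₂ ^ 2 + β₁ ^ 2 + 4 - D) / 16) * hD2
  have hP : ∀ x : ℝ, 0 < (x + 1) ^ 2 + β₁ ^ 2 := fun x => by positivity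
  have hQ : ∀ x : ℝ, 0 < (x - 1) ^ 2 + β₂ ^ 2 := fun x => by positivity
  have hsplit : ∀ x : ℝ,
      β₁ / ((x + 1) ^ 2 + β₁ ^ 2) - Γ₁ * β₂ / ((x - 1) ^ 2 + β₂ ^ 2)
        = (β₁ * ((x - 1) ^ 2 + β₂ ^ 2) - Γ₁ * β₂ * ((x + 1) ^ 2 + β₁ ^ 2))
          / (((x + 1) ^ 2 + β₁ ^ 2) * ((x - 1) ^ 2 + β₂ ^ 2)) := by
    intro x
    field_simp
  have hnum : ∀ x : ℝ,
      0 ≤ β₁ * ((x - 1) ^ 2 + β₂ ^ 2) - Γ₁ * β₂ * ((x + 1) ^ 2 + β₁ ^ 2) := by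
    intro x
    nlinarith [key x, mul_nonneg hA.le (sq_nonneg (x - x₂)), hβ₁]
  constructor
  · intro x
    rw [hf, hsplit]
    exact mul_nonneg (by positivity)
      (div_nonneg (hnum x) (mul_nonneg (hP x).le (hQ x).le))
  · intro x
    rw [hf, hsplit]
    constructor
    · intro h
      have h1 : β₁ * ((x - 1) ^ 2 + β₂ ^ 2) - Γ₁ * β₂ * ((x + 1) ^ 2 + β₁ ^ 2) = 0 := by
        rcases mul_eq_zero.mp h with h2 | h2
        · exact absurd h2 (by positivity)
        · exact (div_eq_zero_iff.mp h2).resolve_right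
            (by positivity)
      have h3 := key x
      rw [h1, mul_zero] at h3
      have h4 : (x - x₂) ^ 2 = 0 := by
        rcases mul_eq_zero.mp h3.symm with h5 | h5
        · exact absurd h5 (ne_of_gt hA)
        · exact h5
      have := pow_eq_zero_iff (n := 2) (by norm_num) |>.mp h4
      linarith
    · intro h
      rw [h]
      have h3 : 2 * β₁ * (β₁ * ((x₂ - 1) ^ 2 + β₂ ^ 2)
          - Γ₁ * β₂ * ((x₂ + 1) ^ 2 + β₁ ^ 2)) = 0 := by
        simpa using key x₂
      have h1 : β₁ * ((x₂ - 1) ^ 2 + β₂ ^ 2) - Γ₁ * β₂ * ((x₂ + 1) ^ 2 + β₁ ^ 2) = 0 := by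
        rcases mul_eq_zero.mp h3 with h5 | h5
        · exact absurd h5 (by positivity)
        · exact h5
      rw [h1]
      simp
end

section
/- Let β₁, β₂ > 0, Γ₁ = (1/(2β₁β₂))((β₁² + β₂² + 4) − √((β₁² + β₂² + 4)² − 4β₁²β₂²)), and x₀ = (β₂² − β₁²)/4. For γ ∈ (0, Γ₁), the quadratic polynomial p_γ(x) = β₁((x−1)² + β₂²) − γβ₂((x+1)² + β₁²) has positive leading coefficient β₁ − γβ₂ > 0 and no real roots; its two complex conjugate roots b, b̄ satisfy |b − x₀|² = (1 − x₀)² + β₂² (i.e., b lies on the circle through z₂ = 1 + β₂·i centered at x₀), the modulus |b − x₀| being independent of γ; and Re b = (β₁ + γβ₂)/(β₁ − γβ₂) is strictly increasing in γ on (0, Γ₁). -/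
open Real Set

set_option maxHeartbeats 1000000 in
/-- **Motion of the complex conjugate roots along the circle during Phase 1.**
For `γ ∈ (0, Γ₁)`, the quadratic `p_γ(x) = β₁((x−1)² + β₂²) − γβ₂((x+1)² + β₁²)` has
positive leading coefficient `β₁ − γβ₂` and no real roots; each of its complex roots
`b` satisfies `|b − x₀|² = (1 − x₀)² + β₂²` (so `b` lies on the circle through
`z₂ = 1 + β₂ i` centered at `x₀`, independently of `γ`) and
`Re b = (β₁ + γβ₂)/(β₁ − γβ₂)`, which is strictly increasing in `γ` on `(0, Γ₁)`. -/
theorem conjugate_roots_on_circle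
    (β₁ β₂ : ℝ) (hβ₁ : 0 < β₁) (hβ₂ : 0 < β₂)
    (Γ₁ : ℝ)
    (hΓ₁ : Γ₁ = (1 / (2 * β₁ * β₂)) * ((β₁ ^ 2 + β₂ ^ 2 + 4)
      - Real.sqrt ((β₁ ^ 2 + β₂ ^ 2 + 4) ^ 2 - 4 * β₁ ^ 2 * β₂ ^ 2)))
    (x₀ : ℝ) (hx₀ : x₀ = (β₂ ^ 2 - β₁ ^ 2) / 4)
    (p : ℝ → ℂ → ℂ)
    (hp : ∀ γ w, p γ w = (β₁ : ℂ) * ((w - 1) ^ 2 + (β₂ : ℂ) ^ 2)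
      - (γ : ℂ) * (β₂ : ℂ) * ((w + 1) ^ 2 + (β₁ : ℂ) ^ 2)) :
    (∀ γ ∈ Ioo (0 : ℝ) Γ₁,
      0 < β₁ - γ * β₂ ∧
      (∀ x : ℝ, p γ (x : ℂ) ≠ 0) ∧
      (∃ b : ℂ, b.im ≠ 0 ∧ p γ b = 0 ∧ p γ (starRingEnd ℂ b) = 0) ∧
      (∀ b : ℂ, p γ b = 0 →
        ‖b - (x₀ : ℂ)‖ ^ 2 = (1 - x₀) ^ 2 + β₂ ^ 2 ∧
        b.re = (β₁ + γ * β₂) / (β₁ - γ * β₂))) ∧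
    StrictMonoOn (fun γ : ℝ => (β₁ + γ * β₂) / (β₁ - γ * β₂)) (Ioo (0 : ℝ) Γ₁) := by

  have hkey : ∀ γ ∈ Ioo (0:ℝ) Γ₁,
      0 < β₁ - γ * β₂ ∧ 0 < β₁*β₂*(1+γ^2) - γ*(β₁^2+β₂^2+4) := by
    intro γ hγ
    obtain ⟨hγ0, hγ1⟩ := hγ
    set S := β₁^2+β₂^2+4 with hS
    have hD : 0 ≤ S^2 - 4*β₁^2*β₂^2 := by
      nlinarith [sq_nonneg (β₁-β₂), sq_nonneg (β₁+β₂), sq_nonneg (β₁*β₂)]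
    set s := Real.sqrt (S^2 - 4*β₁^2*β₂^2) with hsdef
    have hs0 : 0 ≤ s := Real.sqrt_nonneg _
    have hs2 : s^2 = S^2 - 4*β₁^2*β₂^2 := Real.sq_sqrt hD
    have hβ12 : 0 < β₁*β₂ := mul_pos hβ₁ hβ₂
    have hγ1' : 2*β₁*β₂*γ < S - s := by
      calc 2*β₁*β₂*γ < 2*β₁*β₂*Γ₁ := by nlinarith
      _ = S - s := by rw [hΓ₁]; field_simp
    have hsbig : S - 2*β₁^2 < s := by
      nlinarith [sq_nonneg (s + (S - 2*β₁^2)), sq_nonneg (s - (S - 2*β₁^2))]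
    constructor
    · nlinarith
    · nlinarith [sq_nonneg (S - 2*β₁*β₂*γ - s)]
  constructor
  · intro γ hγ
    obtain ⟨ha, hK'⟩ := hkey γ hγ
    refine ⟨ha, ?_⟩
    set a := β₁ - γ * β₂ with hadef
    set K := β₁*β₂*(β₁*β₂*(1+γ^2) - γ*(β₁^2+β₂^2+4)) with hKdef
    have hK : 0 < K := mul_pos (mul_pos hβ₁ hβ₂) hK'
    set x := (β₁ + γ * β₂) / a with hxdef
    set y := Real.sqrt K / a with hydef
    have hy : 0 < y := div_pos (Real.sqrt_pos.mpr hK) ha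
    have hy2 : y ^ 2 = K / a ^ 2 := by rw [hydef, div_pow, Real.sq_sqrt hK.le]
    set r : ℂ := (x : ℂ) + (y : ℂ) * Complex.I with hr
    have hconj : (starRingEnd ℂ) r = (x : ℂ) - (y : ℂ) * Complex.I := by
      simp [hr, Complex.ext_iff]
    have hax : a * x = β₁ + γ * β₂ := by rw [hxdef]; field_simp
    have haxy : a * (x ^ 2 + y ^ 2) = β₁ * (1 + β₂ ^ 2) - γ * β₂ * (1 + β₁ ^ 2) := by
      rw [hy2, hxdef]
      field_simp
      ring
    have hax' : (a : ℂ) * (x : ℂ) = (β₁ : ℂ) + (γ : ℂ) * (β₂ : ℂ) := by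
      exact_mod_cast congrArg (Complex.ofReal) hax
    have haxy' : (a : ℂ) * ((x:ℂ) ^ 2 + (y:ℂ) ^ 2)
        = (β₁:ℂ) * (1 + (β₂:ℂ) ^ 2) - (γ:ℂ) * (β₂:ℂ) * (1 + (β₁:ℂ) ^ 2) := by
      exact_mod_cast congrArg (Complex.ofReal) haxy
    have ha' : (a : ℂ) ≠ 0 := Complex.ofReal_ne_zero.mpr ha.ne'
    have hfact : ∀ w : ℂ, p γ w = (a : ℂ) * ((w - r) * (w - (starRingEnd ℂ) r)) := by
      intro w
      rw [hp, hconj, hr]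
      have hI : (Complex.I)^2 = -1 := Complex.I_sq
      have hacast : (a:ℂ) = (β₁:ℂ) - (γ:ℂ)*(β₂:ℂ) := by push_cast [hadef]; ring
      linear_combination (2*w) * hax' - haxy' + (-(w^2))*hacast + (a:ℂ)*(y:ℂ)^2*hI
    have him : r.im = y := by simp [hr]
    have hre : r.re = x := by simp [hr]
    refine ⟨?_, ⟨r, ?_, ?_, ?_⟩, ?_⟩
    · intro x' hx'
      rw [hfact] at hx'
      rcases mul_eq_zero.mp hx' with h | h
      · exact ha' h
      rcases mul_eq_zero.mp h with h | h
      · have := congrArg Complex.im (sub_eq_zero.mp h)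
        simp [him] at this
        exact hy.ne this
      · have := congrArg Complex.im (sub_eq_zero.mp h)
        rw [Complex.ofReal_im, Complex.conj_im, him] at this
        exact hy.ne' (by linarith)
    · rw [him]; exact hy.ne'
    · rw [hfact]; ring
    · rw [hfact]; ring
    intro b hb
    rw [hfact] at hb
    have hb' : b = r ∨ b = (starRingEnd ℂ) r := by
      rcases mul_eq_zero.mp hb with h | h
      · exact absurd h ha'
      rcases mul_eq_zero.mp h with h | h
      · exact Or.inl (sub_eq_zero.mp h)
      · exact Or.inr (sub_eq_zero.mp h)
    have key : (x - x₀)^2 + y^2 = (1 - x₀)^2 + β₂^2 := by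
      have ha2 : β₁ - γ * β₂ ≠ 0 := ha.ne'
      rw [hy2, hxdef, hKdef, hx₀, hadef]
      field_simp
      ring
    rcases hb' with rfl | rfl
    · constructor
      · rw [← Complex.normSq_eq_norm_sq, Complex.normSq_apply]
        simp only [Complex.sub_re, Complex.sub_im, hre, him, Complex.ofReal_re,
          Complex.ofReal_im]
        rw [sub_zero]; linarith [key]
      · rw [hre]
    · constructor
      · rw [← Complex.normSq_eq_norm_sq, Complex.normSq_apply]
        simp only [Complex.sub_re, Complex.sub_im, Complex.conj_re, Complex.conj_im, hre, him,
          Complex.ofReal_re, Complex.ofReal_im]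
        rw [sub_zero]; linear_combination key
      · rw [Complex.conj_re, hre]
  · intro γ₁ h1 γ₂ h2 h12
    have ha1 := (hkey γ₁ h1).1
    have ha2 := (hkey γ₂ h2).1
    simp only
    rw [div_lt_div_iff₀ ha1 ha2]
    nlinarith [h1.1, h2.1, mul_pos hβ₁ hβ₂]
end

section
/- Let β₁, β₂ > 0 and Γ₁ = (1/(2β₁β₂))((β₁² + β₂² + 4) − √((β₁² + β₂² + 4)² − 4β₁²β₂²)). For every γ with Γ₁ < γ < min(β₁/β₂, 1), there exist real numbers A₁ < A₂ such that the function f_γ(x) = (1/π)(β₁/((x+1)² + β₁²) − γβ₂/((x−1)² + β₂²)) satisfies f_γ(x) < 0 if and only if x ∈ (A₁, A₂); in particular the negative part of the signed equilibrium measure is supported on the compact interval [A₁, A₂], and the support of its positive part is (−∞, A₁] ∪ [A₂, +∞). -/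
open Real Set

set_option maxHeartbeats 1000000 in
/-- **Phase 2 for the signed equilibrium measure.** For
`Γ₁ < γ < min(β₁/β₂, 1)`, the density
`f_γ(x) = (1/π)(β₁/((x+1)² + β₁²) − γβ₂/((x−1)² + β₂²))` is negative exactly on a
bounded open interval `(A₁, A₂)`; consequently the negative part of the signed
equilibrium measure is supported on the compact interval `[A₁, A₂]`, and the support
of its positive part is `(−∞, A₁] ∪ [A₂, ∞)`. -/
theorem signed_measure_phase_two
    (β₁ β₂ : ℝ) (hβ₁ : 0 < β₁) (hβ₂ : 0 < β₂)
    (Γ₁ : ℝ)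
    (hΓ₁ : Γ₁ = (1 / (2 * β₁ * β₂)) * ((β₁ ^ 2 + β₂ ^ 2 + 4)
      - Real.sqrt ((β₁ ^ 2 + β₂ ^ 2 + 4) ^ 2 - 4 * β₁ ^ 2 * β₂ ^ 2)))
    (f : ℝ → ℝ → ℝ)
    (hf : ∀ γ x, f γ x = (1 / π) *
      (β₁ / ((x + 1) ^ 2 + β₁ ^ 2) - γ * β₂ / ((x - 1) ^ 2 + β₂ ^ 2)))
    (γ : ℝ) (hγ : Γ₁ < γ) (hγ' : γ < min (β₁ / β₂) 1) :
    ∃ A₁ A₂ : ℝ, A₁ < A₂ ∧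
      (∀ x : ℝ, f γ x < 0 ↔ x ∈ Ioo A₁ A₂) ∧
      closure {x : ℝ | f γ x < 0} = Icc A₁ A₂ ∧
      closure {x : ℝ | 0 < f γ x} = Iic A₁ ∪ Ici A₂ := by
  obtain ⟨hγb, hγ1⟩ := lt_min_iff.mp hγ'
  set S : ℝ := β₁ ^ 2 + β₂ ^ 2 + 4 with hSdef
  have hS2 : (0:ℝ) ≤ S ^ 2 - 4 * β₁ ^ 2 * β₂ ^ 2 := by
    nlinarith [sq_nonneg (β₁ - β₂), sq_nonneg (β₁ * β₂), sq_nonneg (β₁ + β₂)]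
  set s : ℝ := Real.sqrt (S ^ 2 - 4 * β₁ ^ 2 * β₂ ^ 2) with hsdef
  have hs0 : 0 ≤ s := Real.sqrt_nonneg _
  have hs2 : s ^ 2 = S ^ 2 - 4 * β₁ ^ 2 * β₂ ^ 2 := Real.sq_sqrt hS2
  have hb12 : 0 < β₁ * β₂ := mul_pos hβ₁ hβ₂
  -- consequence of `Γ₁ < γ`
  have hγΓ : S - s < γ * (2 * β₁ * β₂) := by
    have h := hγ
    rw [hΓ₁, div_mul_eq_mul_div, one_mul,
      div_lt_iff₀ (by positivity : (0:ℝ) < 2 * β₁ * β₂)] at h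
    exact h
  -- leading coefficient of the quadratic is positive
  have hA : 0 < β₁ - γ * β₂ := by
    have := (lt_div_iff₀ hβ₂).mp hγb
    linarith
  have hpos : 0 < S - γ * (2 * β₁ * β₂) := by
    nlinarith [sq_nonneg (β₁ - β₂)]
  -- key discriminant inequality
  have hkey : 0 < γ * S - β₁ * β₂ * (1 + γ ^ 2) := by
    nlinarith [hs2, hγΓ, hpos, mul_pos hpos (sub_pos.mpr hγΓ)]
  set A : ℝ := β₁ - γ * β₂ with hAdef
  set B : ℝ := β₁ + γ * β₂ with hBdef
  set C : ℝ := β₁ * (1 + β₂ ^ 2) - γ * β₂ * (1 + β₁ ^ 2) with hCdef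
  have hD : 0 < B ^ 2 - A * C := by
    have hEq : B ^ 2 - A * C = β₁ * β₂ * (γ * S - β₁ * β₂ * (1 + γ ^ 2)) := by
      rw [hAdef, hBdef, hCdef, hSdef]; ring
    rw [hEq]; exact mul_pos hb12 hkey
  set rD : ℝ := Real.sqrt (B ^ 2 - A * C) with hrDdef
  have hrD : 0 < rD := Real.sqrt_pos.mpr hD
  have hrD2 : rD ^ 2 = B ^ 2 - A * C := Real.sq_sqrt hD.le
  set q : ℝ → ℝ := fun x => A * x ^ 2 - 2 * B * x + C with hqdef
  set A₁ : ℝ := (B - rD) / A with hA1def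
  set A₂ : ℝ := (B + rD) / A with hA2def
  have hfact : ∀ x : ℝ, A * q x = (A * x - B) ^ 2 - rD ^ 2 := by
    intro x
    simp only [hqdef]
    linear_combination hrD2
  -- rewrite f in terms of q
  have hfq : ∀ x : ℝ, f γ x =
      q x / (π * (((x + 1) ^ 2 + β₁ ^ 2) * ((x - 1) ^ 2 + β₂ ^ 2))) := by
    intro x
    have d1 : ((x + 1) ^ 2 + β₁ ^ 2) ≠ 0 := by positivity
    have d2 : ((x - 1) ^ 2 + β₂ ^ 2) ≠ 0 := by positivity
    have hπ : (π : ℝ) ≠ 0 := Real.pi_ne_zero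
    rw [hf, hqdef]
    field_simp
    ring
  have hden : ∀ x : ℝ,
      0 < π * (((x + 1) ^ 2 + β₁ ^ 2) * ((x - 1) ^ 2 + β₂ ^ 2)) := by
    intro x
    have := Real.pi_pos
    positivity
  have hiffneg : ∀ x : ℝ, f γ x < 0 ↔ q x < 0 := by
    intro x
    rw [hfq x]
    constructor
    · intro h
      by_contra hc
      push_neg at hc
      exact absurd (div_nonneg hc (hden x).le) (not_le.mpr h)
    · intro h
      exact div_neg_of_neg_of_pos h (hden x)
  have hiffpos : ∀ x : ℝ, 0 < f γ x ↔ 0 < q x := by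
    intro x
    rw [hfq x]
    constructor
    · intro h
      by_contra hc
      push_neg at hc
      exact absurd (div_nonpos_of_nonpos_of_nonneg hc (hden x).le) (not_le.mpr h)
    · intro h
      exact div_pos h (hden x)
  -- quadratic sign analysis
  have hqneg : ∀ x : ℝ, q x < 0 ↔ A₁ < x ∧ x < A₂ := by
    intro x
    constructor
    · intro h
      have hAq : A * q x < 0 := mul_neg_of_pos_of_neg hA h
      rw [hfact x] at hAq
      constructor
      · rw [hA1def, div_lt_iff₀ hA]
        nlinarith [hrD, hAq, sq_nonneg (A * x - B + rD)]
      · rw [hA2def, lt_div_iff₀ hA]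
        nlinarith [hrD, hAq, sq_nonneg (A * x - B - rD)]
    · rintro ⟨h1, h2⟩
      rw [hA1def, div_lt_iff₀ hA] at h1
      rw [hA2def, lt_div_iff₀ hA] at h2
      have hp : 0 < (x * A - (B - rD)) * ((B + rD) - x * A) :=
        mul_pos (by linarith) (by linarith)
      nlinarith [hfact x, hp, hA]
  have hqpos : ∀ x : ℝ, 0 < q x ↔ x < A₁ ∨ A₂ < x := by
    intro x
    constructor
    · intro h
      by_contra hc
      push_neg at hc
      obtain ⟨h1, h2⟩ := hc
      rw [hA1def, div_le_iff₀ hA] at h1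
      rw [hA2def, le_div_iff₀ hA] at h2
      have hAq : 0 < A * q x := mul_pos hA h
      rw [hfact x] at hAq
      nlinarith [hAq]
    · rintro (h | h)
      · rw [hA1def, lt_div_iff₀ hA] at h
        have hp : 0 < ((B - rD) - x * A) * ((B + rD) - x * A) :=
          mul_pos (by linarith) (by linarith)
        nlinarith [hfact x, hp, hA]
      · rw [hA2def, div_lt_iff₀ hA] at h
        have hp : 0 < (x * A - (B - rD)) * (x * A - (B + rD)) :=
          mul_pos (by linarith) (by linarith)
        nlinarith [hfact x, hp, hA]
  have hlt : A₁ < A₂ := by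
    rw [hA1def, hA2def, div_lt_div_iff₀ hA hA]
    nlinarith [mul_pos hrD hA]
  have hsetneg : {x : ℝ | f γ x < 0} = Ioo A₁ A₂ := by
    ext x
    simp only [mem_setOf_eq, mem_Ioo]
    exact (hiffneg x).trans (hqneg x)
  have hsetpos : {x : ℝ | 0 < f γ x} = Iio A₁ ∪ Ioi A₂ := by
    ext x
    simp only [mem_setOf_eq, mem_union, mem_Iio, mem_Ioi]
    exact (hiffpos x).trans (hqpos x)
  refine ⟨A₁, A₂, hlt, ?_, ?_, ?_⟩
  · intro x
    simp only [mem_Ioo]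
    exact (hiffneg x).trans (hqneg x)
  · rw [hsetneg, closure_Ioo (ne_of_lt hlt)]
  · rw [hsetpos, closure_union, closure_Iio, closure_Ioi]
end

section
/- Let 0 < β₁ < β₂ and f_γ(x) = (1/π)(β₁/((x+1)² + β₁²) − γβ₂/((x−1)² + β₂²)). (a) For γ = β₁/β₂, there exists A₁ ∈ ℝ such that f_γ(x) ≥ 0 if and only if x ≤ A₁; hence the support of the positive part of the signed equilibrium measure equals (−∞, A₁]. (b) For every γ ∈ (β₁/β₂, 1), there exist real numbers Ã₂ < A₁ such that f_γ(x) ≥ 0 if and only if x ∈ [Ã₂, A₁]; hence the support of the positive part of the signed equilibrium measure is the compact interval [Ã₂, A₁]. -/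
open Real Set

set_option maxHeartbeats 1600000 in
/-- **Second transition and Phase 3 for the signed equilibrium measure (`β₁ < β₂`).**
With `f_γ(x) = (1/π)(β₁/((x+1)² + β₁²) − γβ₂/((x−1)² + β₂²))`:
(a) for `γ = β₁/β₂` there is `A₁` with `f_γ(x) ≥ 0 ↔ x ≤ A₁`, so the support of the
positive part of the signed equilibrium measure is `(−∞, A₁]`;
(b) for `γ ∈ (β₁/β₂, 1)` there are `Ã₂ < A₁` with `f_γ(x) ≥ 0 ↔ x ∈ [Ã₂, A₁]`, so that
support is the compact interval `[Ã₂, A₁]`. -/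
theorem signed_measure_second_transition_and_phase_three
    (β₁ β₂ : ℝ) (hβ₁ : 0 < β₁) (hβ₁₂ : β₁ < β₂)
    (f : ℝ → ℝ → ℝ)
    (hf : ∀ γ x, f γ x = (1 / π) *
      (β₁ / ((x + 1) ^ 2 + β₁ ^ 2) - γ * β₂ / ((x - 1) ^ 2 + β₂ ^ 2))) :
    (∃ A₁ : ℝ, (∀ x : ℝ, 0 ≤ f (β₁ / β₂) x ↔ x ≤ A₁) ∧
      closure {x : ℝ | 0 < f (β₁ / β₂) x} = Iic A₁) ∧
    (∀ γ : ℝ, β₁ / β₂ < γ → γ < 1 →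
      ∃ A₂' A₁ : ℝ, A₂' < A₁ ∧ (∀ x : ℝ, 0 ≤ f γ x ↔ x ∈ Icc A₂' A₁) ∧
        closure {x : ℝ | 0 < f γ x} = Icc A₂' A₁) := by
  have hβ₂ : 0 < β₂ := hβ₁.trans hβ₁₂
  have hπ : 0 < π := Real.pi_pos
  -- The sign of `f γ x` is the sign of the quadratic
  -- `g γ x := β₁*((x-1)^2+β₂^2) - γ*β₂*((x+1)^2+β₁^2)`.
  have hsign : ∀ γ x : ℝ,
      (0 ≤ f γ x ↔ 0 ≤ β₁ * ((x - 1) ^ 2 + β₂ ^ 2) - γ * β₂ * ((x + 1) ^ 2 + β₁ ^ 2)) ∧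
      (0 < f γ x ↔ 0 < β₁ * ((x - 1) ^ 2 + β₂ ^ 2) - γ * β₂ * ((x + 1) ^ 2 + β₁ ^ 2)) := by
    intro γ x
    have hd1 : 0 < (x + 1) ^ 2 + β₁ ^ 2 := by positivity
    have hd2 : 0 < (x - 1) ^ 2 + β₂ ^ 2 := by positivity
    have hπD : 0 < π * (((x + 1) ^ 2 + β₁ ^ 2) * ((x - 1) ^ 2 + β₂ ^ 2)) := by positivity
    have key : f γ x = (β₁ * ((x - 1) ^ 2 + β₂ ^ 2) - γ * β₂ * ((x + 1) ^ 2 + β₁ ^ 2)) /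
        (π * (((x + 1) ^ 2 + β₁ ^ 2) * ((x - 1) ^ 2 + β₂ ^ 2))) := by
      rw [hf]
      field_simp
    rw [key]
    constructor
    · rw [le_div_iff₀ hπD, zero_mul]
    · rw [lt_div_iff₀ hπD, zero_mul]
  constructor
  · -- Part (a): γ = β₁/β₂
    have hc : β₁ / β₂ * β₂ = β₁ := div_mul_cancel₀ _ hβ₂.ne'
    refine ⟨(β₂ ^ 2 - β₁ ^ 2) / 4, fun x => ?_, ?_⟩
    · rw [(hsign _ x).1, hc]
      constructor <;> intro h <;> nlinarith [hβ₁]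
    · have hset : {x : ℝ | 0 < f (β₁ / β₂) x} = Iio ((β₂ ^ 2 - β₁ ^ 2) / 4) := by
        ext x
        simp only [mem_setOf_eq, mem_Iio]
        rw [(hsign _ x).2, hc]
        constructor <;> intro h <;> nlinarith [hβ₁]
      rw [hset, closure_Iio]
  · -- Part (b): β₁/β₂ < γ < 1
    intro γ hγ₁ hγ₂
    have hγ₀ : 0 < γ := lt_trans (by positivity) hγ₁
    obtain ⟨a, ha_def⟩ : ∃ a : ℝ, a = γ * β₂ - β₁ := ⟨_, rfl⟩
    obtain ⟨b, hb_def⟩ : ∃ b : ℝ, b = β₁ + γ * β₂ := ⟨_, rfl⟩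
    obtain ⟨D, hD_def⟩ : ∃ D : ℝ, D = b ^ 2 - a * (a - β₁ * β₂ * (β₂ - γ * β₁)) := ⟨_, rfl⟩
    have ha : 0 < a := by
      have := (div_lt_iff₀ hβ₂).mp hγ₁
      rw [ha_def]; linarith
    have hβ' : 0 < β₂ - γ * β₁ := by nlinarith
    have hD : 0 < D := by
      have hDeq : D = β₁ * β₂ * (4 * γ + a * (β₂ - γ * β₁)) := by
        rw [hD_def, ha_def, hb_def]; ring
      rw [hDeq]
      have : 0 < 4 * γ + a * (β₂ - γ * β₁) := by positivity
      positivity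
    obtain ⟨s, hs_def⟩ : ∃ s : ℝ, s = Real.sqrt D := ⟨_, rfl⟩
    have hs2 : s ^ 2 = D := by rw [hs_def]; exact Real.sq_sqrt hD.le
    have hspos : 0 < s := by rw [hs_def]; exact Real.sqrt_pos.mpr hD
    -- key algebraic identity: a * g(x) = D - (a*x+b)^2
    have hid : ∀ x : ℝ, a * (β₁ * ((x - 1) ^ 2 + β₂ ^ 2) - γ * β₂ * ((x + 1) ^ 2 + β₁ ^ 2))
        = s ^ 2 - (a * x + b) ^ 2 := by
      intro x
      rw [hs2, hD_def, ha_def, hb_def]; ring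
    have hlt : (-b - s) / a < (-b + s) / a := by
      rw [div_lt_div_iff₀ ha ha]
      nlinarith [hspos, ha]
    refine ⟨(-b - s) / a, (-b + s) / a, hlt, ?_, ?_⟩
    · intro x
      rw [(hsign γ x).1, mem_Icc, div_le_iff₀ ha, le_div_iff₀ ha]
      constructor
      · intro h
        have h2 : (a * x + b) ^ 2 ≤ s ^ 2 := by
          have h' := mul_nonneg ha.le h
          rw [hid x] at h'
          linarith
        constructor
        · nlinarith [sq_nonneg (a * x + b + s), hspos, h2]
        · nlinarith [sq_nonneg (a * x + b - s), hspos, h2]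
      · rintro ⟨h1, h2⟩
        have key : 0 ≤ (s - (a * x + b)) * (a * x + b + s) := by
          apply mul_nonneg <;> linarith
        have h3 : 0 ≤ a * (β₁ * ((x - 1) ^ 2 + β₂ ^ 2) - γ * β₂ * ((x + 1) ^ 2 + β₁ ^ 2)) := by
          rw [hid x]
          nlinarith [key]
        have h4 := div_nonneg h3 ha.le
        rwa [mul_div_cancel_left₀ _ ha.ne'] at h4
    · have hset : {x : ℝ | 0 < f γ x} = Ioo ((-b - s) / a) ((-b + s) / a) := by
        ext x
        simp only [mem_setOf_eq, mem_Ioo]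
        rw [(hsign γ x).2, div_lt_iff₀ ha, lt_div_iff₀ ha]
        constructor
        · intro h
          have h2 : (a * x + b) ^ 2 < s ^ 2 := by
            have h' := mul_pos ha h
            rw [hid x] at h'
            linarith
          constructor
          · nlinarith [sq_nonneg (a * x + b + s), hspos, h2]
          · nlinarith [sq_nonneg (a * x + b - s), hspos, h2]
        · rintro ⟨h1, h2⟩
          have key : 0 < (s - (a * x + b)) * (a * x + b + s) := by
            apply mul_pos <;> linarith
          have h3 : 0 < a * (β₁ * ((x - 1) ^ 2 + β₂ ^ 2) - γ * β₂ * ((x + 1) ^ 2 + β₁ ^ 2)) := by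
            rw [hid x]
            nlinarith [key]
          have h4 := div_pos h3 ha
          rwa [mul_div_cancel_left₀ _ ha.ne'] at h4
      rw [hset, closure_Ioo hlt.ne]
end

section
/- (Principle of descent for measures with unbounded supports.) Let (μ_n) be a sequence of finite positive Borel measures on ℂ which is log-tight, i.e., for every ε > 0 there is a compact set K ⊂ ℂ such that ∫_{ℂ∖K} log(1 + |t|) dμ_n(t) ≤ ε for all n, and assume μ_n converges weak-* to a finite positive measure μ. Then for every z ∈ ℂ, V^μ(z) ≤ lim inf_n V^{μ_n}(z). More generally, if z_n → z* in ℂ, then V^μ(z*) ≤ lim inf_n V^{μ_n}(z_n). -/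
open MeasureTheory Real Filter
open scoped ENNReal

/-- The logarithmic potential `V^μ(z) = ∫ log (1/|z − t|) dμ(t)` of a positive measure
on `ℂ`, with values in `(−∞, +∞]`: the positive part of the integrand is integrated as
a lower integral, and the negative part (which is integrable whenever `μ` integrates
`log (1 + |t|)`) as a Bochner integral. -/
noncomputable def logPot (μ : Measure ℂ) (z : ℂ) : EReal :=
  ((∫⁻ t, ENNReal.ofReal (-Real.log (‖z - t‖)) ∂μ : ℝ≥0∞) : EReal)
    - ((∫ t, max (Real.log (‖z - t‖)) 0 ∂μ : ℝ) : EReal)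



/-! ### Elementary auxiliary functions -/

/-- cutoff: `1` on the ball of radius `R`, `0` outside radius `R+1`. -/
noncomputable def desChi (R : ℝ) (t : ℂ) : ℝ := max 0 (min 1 (R + 1 - ‖t‖))

lemma desChi_nonneg (R : ℝ) (t : ℂ) : 0 ≤ desChi R t := le_max_left _ _

lemma desChi_le_one (R : ℝ) (t : ℂ) : desChi R t ≤ 1 := by
  unfold desChi
  rcases le_total (min 1 (R + 1 - ‖t‖)) 0 with h | h
  · simpa [max_eq_left h]
  · rw [max_eq_right h]; exact min_le_left _ _

lemma desChi_eq_one {R : ℝ} {t : ℂ} (h : ‖t‖ ≤ R) : desChi R t = 1 := by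
  have : (1:ℝ) ≤ R + 1 - ‖t‖ := by linarith
  unfold desChi
  rw [min_eq_left this, max_eq_right zero_le_one]

lemma desChi_eq_zero {R : ℝ} {t : ℂ} (h : R + 1 ≤ ‖t‖) : desChi R t = 0 := by
  have : R + 1 - ‖t‖ ≤ 0 := by linarith
  unfold desChi
  rw [max_eq_left]
  exact le_trans (min_le_right _ _) this

lemma desChi_continuous (R : ℝ) : Continuous (desChi R) := by
  unfold desChi
  exact continuous_const.max (continuous_const.min (continuous_const.sub continuous_norm))

lemma desChi_hasCompactSupport (R : ℝ) : HasCompactSupport (desChi R) := by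
  apply HasCompactSupport.intro (isCompact_closedBall (0:ℂ) (R+1))
  intro t ht
  have : R + 1 ≤ ‖t‖ := by
    simpa [Metric.mem_closedBall, Complex.dist_eq] using (lt_of_not_ge (fun h => ht (by simpa [Metric.mem_closedBall, Complex.dist_eq] using h))).le
  exact desChi_eq_zero this

lemma desChi_mono {R R' : ℝ} (h : R ≤ R') (t : ℂ) : desChi R t ≤ desChi R' t := by
  unfold desChi
  exact max_le_max le_rfl (min_le_min le_rfl (by linarith))

/-- `(log r)⁺` is 1-Lipschitz on `[0,∞)`. -/
lemma logpos_lip : ∀ r s : ℝ, 0 ≤ r → 0 ≤ s → s ≤ r →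
    |max (Real.log r) 0 - max (Real.log s) 0| ≤ r - s := by
  intro r s hr hs hsr
  have hmono : max (Real.log s) 0 ≤ max (Real.log r) 0 := by
    rcases eq_or_lt_of_le hs with h0 | h0
    · simp [← h0]
    · exact max_le_max (Real.log_le_log h0 hsr) le_rfl
  rw [abs_of_nonneg (by linarith)]
  rcases le_total r 1 with h1 | h1
  · have : Real.log r ≤ 0 := Real.log_nonpos hr h1
    have : max (Real.log r) 0 = 0 := max_eq_right this
    rw [this]
    have : max (Real.log s) 0 = 0 := max_eq_right (Real.log_nonpos hs (le_trans hsr h1))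
    rw [this]; linarith
  · rcases le_total 1 s with h2 | h2
    · have hlogr : max (Real.log r) 0 = Real.log r := max_eq_left (Real.log_nonneg h1)
      have hlogs : max (Real.log s) 0 = Real.log s := max_eq_left (Real.log_nonneg h2)
      rw [hlogr, hlogs]
      have hs0 : (0:ℝ) < s := lt_of_lt_of_le zero_lt_one h2
      have : Real.log r - Real.log s = Real.log (r / s) := (Real.log_div (by positivity) (by positivity)).symm
      rw [this]
      have := Real.log_le_sub_one_of_pos (show (0:ℝ) < r / s by positivity)
      have hrs : r / s - 1 = (r - s) / s := by field_simp
      have : Real.log (r/s) ≤ (r - s)/s := by rw [← hrs]; exact this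
      refine le_trans this ?_
      rw [div_le_iff₀ hs0]
      nlinarith
    · have hlogr : max (Real.log r) 0 = Real.log r := max_eq_left (Real.log_nonneg h1)
      have hlogs : max (Real.log s) 0 = 0 := max_eq_right (Real.log_nonpos hs h2)
      rw [hlogr, hlogs, sub_zero]
      have := Real.log_le_sub_one_of_pos (lt_of_lt_of_le zero_lt_one h1)
      linarith

/-- general version -/
lemma logpos_lip' (r s : ℝ) (hr : 0 ≤ r) (hs : 0 ≤ s) :
    |max (Real.log r) 0 - max (Real.log s) 0| ≤ |r - s| := by
  rcases le_total s r with h | h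
  · have h2 : |r - s| = r - s := abs_of_nonneg (by linarith)
    rw [h2]; exact logpos_lip r s hr hs h
  · have h2 : |r - s| = s - r := by rw [abs_sub_comm]; exact abs_of_nonneg (by linarith)
    rw [h2, abs_sub_comm]; exact logpos_lip s r hs hr h


noncomputable def desG (M r : ℝ) : ℝ := min (max (-Real.log r) 0) M
noncomputable def desF (M r : ℝ) : ℝ := min (M^2 * r) (desG M r)
noncomputable def desPsi (M : ℝ) (z t : ℂ) : ℝ := desF M (‖z - t‖)

lemma desG_nonneg {M : ℝ} (hM : 0 ≤ M) (r : ℝ) : 0 ≤ desG M r :=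
  le_min (le_max_right _ _) hM

lemma desF_nonneg {M : ℝ} (hM : 0 ≤ M) {r : ℝ} (hr : 0 ≤ r) : 0 ≤ desF M r :=
  le_min (by positivity) (desG_nonneg hM r)

lemma desF_le_logpos (M r : ℝ) : desF M r ≤ max (-Real.log r) 0 :=
  le_trans (min_le_right _ _) (le_trans (min_le_left _ _) le_rfl)

lemma desF_le_sq (M r : ℝ) : desF M r ≤ M^2 * r := min_le_left _ _

lemma desF_zero {M : ℝ} (hM : 0 ≤ M) : desF M 0 = 0 := by
  unfold desF desG
  simp [Real.log_zero, hM]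

/-- the clamp to `[0,M]` is 1-Lipschitz -/
lemma clamp_lip (M a b : ℝ) : |min (max a 0) M - min (max b 0) M| ≤ |a - b| := by
  refine le_trans (abs_min_sub_min_le_max _ _ _ _) ?_
  rw [sub_self, abs_zero]
  refine max_le (le_trans (abs_max_sub_max_le_max _ _ _ _) ?_) (abs_nonneg _)
  rw [sub_self, abs_zero]
  exact max_le le_rfl (abs_nonneg _)

lemma desG_lip_core {M : ℝ} (hM : 0 ≤ M) {r s : ℝ} (hs : Real.exp (-M) ≤ s) (hsr : s ≤ r) :
    |desG M r - desG M s| ≤ Real.exp M * (r - s) := by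
  have hs0 : (0:ℝ) < s := lt_of_lt_of_le (Real.exp_pos _) hs
  have hr0 : (0:ℝ) < r := lt_of_lt_of_le hs0 hsr
  have h1 : |desG M r - desG M s| ≤ |(-Real.log r) - (-Real.log s)| := clamp_lip M _ _
  have h2 : |(-Real.log r) - (-Real.log s)| = Real.log r - Real.log s := by
    rw [abs_sub_comm]
    have : Real.log s ≤ Real.log r := Real.log_le_log hs0 hsr
    rw [abs_of_nonneg (by linarith)]
    ring
  have h3 : Real.log r - Real.log s ≤ (r - s)/s := by
    rw [← Real.log_div (ne_of_gt hr0) (ne_of_gt hs0)]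
    have := Real.log_le_sub_one_of_pos (show (0:ℝ) < r/s by positivity)
    have heq : r/s - 1 = (r-s)/s := by field_simp
    linarith [heq ▸ this]
  have hse : 1 ≤ s * Real.exp M := by
    have := Real.exp_neg M
    have h4 : Real.exp (-M) * Real.exp M = 1 := by
      rw [← Real.exp_add]; simp
    nlinarith [Real.exp_pos M]
  have h5 : (r - s)/s ≤ Real.exp M * (r - s) := by
    rw [div_le_iff₀ hs0]
    nlinarith
  linarith
lemma desG_eq_M {M : ℝ} (hM : 0 ≤ M) {r : ℝ} (hr0 : 0 < r) (hr : r ≤ Real.exp (-M)) :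
    desG M r = M := by
  have : Real.log r ≤ -M := by
    calc Real.log r ≤ Real.log (Real.exp (-M)) := Real.log_le_log hr0 hr
    _ = -M := Real.log_exp _
  have h1 : max (-Real.log r) 0 = -Real.log r := max_eq_left (by linarith)
  unfold desG
  rw [h1, min_eq_right (by linarith)]

lemma desG_lip {M : ℝ} (hM : 0 ≤ M) {r s : ℝ} (hs : 0 < s) (hsr : s ≤ r) :
    |desG M r - desG M s| ≤ Real.exp M * (r - s) := by
  rcases le_total r (Real.exp (-M)) with h | h
  · rw [desG_eq_M hM (lt_of_lt_of_le hs hsr) h, desG_eq_M hM hs (le_trans hsr h), sub_self, abs_zero]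
    have := Real.exp_pos M
    nlinarith
  · rcases le_total (Real.exp (-M)) s with h2 | h2
    · exact desG_lip_core hM h2 hsr
    · have hGs : desG M s = M := desG_eq_M hM hs h2
      have hGe : desG M (Real.exp (-M)) = M := desG_eq_M hM (Real.exp_pos _) le_rfl
      have hcore := desG_lip_core hM (le_refl (Real.exp (-M))) h
      rw [hGe] at hcore
      have : |desG M r - M| ≤ Real.exp M * (r - Real.exp (-M)) := by
        rw [abs_sub_comm] at hcore ⊢; exact hcore
      rw [hGs]
      refine le_trans this ?_
      have := Real.exp_pos M
      nlinarith

lemma desF_lip_core {M : ℝ} (hM : 0 ≤ M) {r s : ℝ} (hs : 0 ≤ s) (hsr : s ≤ r) :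
    |desF M r - desF M s| ≤ max (M^2) (Real.exp M) * (r - s) := by
  have hmax0 : 0 ≤ max (M^2) (Real.exp M) := le_trans (Real.exp_pos M).le (le_max_right _ _)
  have hr0 : 0 ≤ r := le_trans hs hsr
  rcases eq_or_lt_of_le hs with h0 | h0
  · rw [← h0, desF_zero hM, sub_zero, sub_zero,
      abs_of_nonneg (desF_nonneg hM hr0)]
    calc desF M r ≤ M^2 * r := desF_le_sq M r
    _ ≤ max (M^2) (Real.exp M) * r := mul_le_mul_of_nonneg_right (le_max_left _ _) hr0
  · unfold desF
    refine le_trans (abs_min_sub_min_le_max _ _ _ _) (max_le ?_ ?_)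
    · rw [← mul_sub, abs_mul, abs_of_nonneg (by positivity : (0:ℝ) ≤ M^2),
        abs_of_nonneg (by linarith : (0:ℝ) ≤ r - s)]
      exact mul_le_mul_of_nonneg_right (le_max_left _ _) (by linarith)
    · exact le_trans (desG_lip hM h0 hsr)
        (mul_le_mul_of_nonneg_right (le_max_right _ _) (by linarith))

lemma desF_lip {M : ℝ} (hM : 0 ≤ M) {r s : ℝ} (hr : 0 ≤ r) (hs : 0 ≤ s) :
    |desF M r - desF M s| ≤ max (M^2) (Real.exp M) * |r - s| := by
  rcases le_total s r with h | h
  · have h2 : |r - s| = r - s := abs_of_nonneg (by linarith)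
    rw [h2]; exact desF_lip_core hM hs h
  · have h2 : |r - s| = s - r := by rw [abs_sub_comm]; exact abs_of_nonneg (by linarith)
    rw [h2, abs_sub_comm]; exact desF_lip_core hM hr h

lemma desPsi_lipz {M : ℝ} (hM : 0 ≤ M) (z z' t : ℂ) :
    |desPsi M z t - desPsi M z' t| ≤ max (M^2) (Real.exp M) * ‖z - z'‖ := by
  unfold desPsi
  refine le_trans (desF_lip hM (norm_nonneg _) (norm_nonneg _)) ?_
  have hmax0 : 0 ≤ max (M^2) (Real.exp M) := le_trans (Real.exp_pos M).le (le_max_right _ _)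
  apply mul_le_mul_of_nonneg_left _ hmax0
  have := abs_norm_sub_norm_le (z - t) (z' - t)
  have heq : (z - t) - (z' - t) = z - z' := by ring
  rw [heq] at this
  exact this

lemma desPsi_lipt {M : ℝ} (hM : 0 ≤ M) (z t t' : ℂ) :
    |desPsi M z t - desPsi M z t'| ≤ max (M^2) (Real.exp M) * ‖t - t'‖ := by
  unfold desPsi
  refine le_trans (desF_lip hM (norm_nonneg _) (norm_nonneg _)) ?_
  have hmax0 : 0 ≤ max (M^2) (Real.exp M) := le_trans (Real.exp_pos M).le (le_max_right _ _)
  apply mul_le_mul_of_nonneg_left _ hmax0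
  have := abs_norm_sub_norm_le (z - t) (z - t')
  have heq : (z - t) - (z - t') = t' - t := by ring
  rw [heq, norm_sub_rev t' t] at this
  exact this

lemma desPsi_cont {M : ℝ} (hM : 0 ≤ M) (z : ℂ) : Continuous (fun t => desPsi M z t) := by
  have : LipschitzWith (Real.toNNReal (max (M^2) (Real.exp M))) (fun t => desPsi M z t) := by
    apply LipschitzWith.of_dist_le_mul
    intro t t'
    rw [Real.dist_eq, Complex.dist_eq,
      Real.coe_toNNReal _ (le_trans (Real.exp_pos M).le (le_max_right _ _))]
    exact desPsi_lipt hM z t t'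
  exact this.continuous

lemma desPsi_eq_zero {M : ℝ} (hM : 0 ≤ M) {z t : ℂ} (h : 1 ≤ ‖z - t‖) :
    desPsi M z t = 0 := by
  unfold desPsi desF desG
  have hlog : Real.log (‖z - t‖) ≥ 0 := Real.log_nonneg h
  rw [max_eq_right (by linarith), min_eq_left hM]
  exact min_eq_right (by positivity)

lemma desPsi_hcs {M : ℝ} (hM : 0 ≤ M) (z : ℂ) : HasCompactSupport (fun t => desPsi M z t) := by
  apply HasCompactSupport.intro (isCompact_closedBall z 1)
  intro t ht
  apply desPsi_eq_zero hM
  have : 1 < dist t z := by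
    by_contra h
    exact ht (Metric.mem_closedBall.mpr (le_of_not_gt h))
  rw [Complex.dist_eq] at this
  rw [norm_sub_rev] at this
  exact this.le

lemma desF_mono {M M' r : ℝ} (hM : 0 ≤ M) (hMM : M ≤ M') (hr : 0 ≤ r) :
    desF M r ≤ desF M' r := by
  unfold desF desG
  have h2 : M^2 ≤ M'^2 := by nlinarith
  exact min_le_min (mul_le_mul_of_nonneg_right h2 hr) (min_le_min le_rfl hMM)

lemma desF_eq_logpos {M r : ℝ} (h1 : max (-Real.log r) 0 ≤ M) (h2 : max (-Real.log r) 0 ≤ M^2 * r) :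
    desF M r = max (-Real.log r) 0 := by
  unfold desF desG
  rw [min_eq_left h1, min_eq_right h2]


noncomputable def desLw (t : ℂ) : ℝ := Real.log (1 + ‖t‖)
noncomputable def desB (z t : ℂ) : ℝ := max (Real.log (‖z - t‖)) 0

lemma desLw_nonneg (t : ℂ) : 0 ≤ desLw t :=
  Real.log_nonneg (by simpa using norm_nonneg t)

lemma desLw_continuous : Continuous desLw := by
  rw [continuous_iff_continuousAt]
  intro t
  apply ContinuousAt.comp (Real.continuousAt_log (by positivity))
  exact (continuous_const.add continuous_norm).continuousAt

lemma desLw_measurable : Measurable fun t => ENNReal.ofReal (desLw t) :=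
  ENNReal.measurable_ofReal.comp desLw_continuous.measurable

lemma desB_nonneg (z t : ℂ) : 0 ≤ desB z t := le_max_right _ _

lemma desB_le (z t : ℂ) : desB z t ≤ Real.log (1 + ‖z‖) + desLw t := by
  have h1 : (0:ℝ) ≤ Real.log (1 + ‖z‖) :=
    Real.log_nonneg (by simpa using norm_nonneg z)
  have h2 := desLw_nonneg t
  apply max_le _ (by linarith)
  rcases eq_or_lt_of_le (norm_nonneg (z - t)) with h0 | h0
  · rw [← h0, Real.log_zero]; linarith
  · have habs : ‖z - t‖ ≤ (1 + ‖z‖) * (1 + ‖t‖) := by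
      have := norm_sub_le z t
      nlinarith [norm_nonneg z, norm_nonneg t]
    calc Real.log (‖z - t‖) ≤ Real.log ((1 + ‖z‖) * (1 + ‖t‖)) :=
          Real.log_le_log h0 habs
    _ = Real.log (1 + ‖z‖) + desLw t := by
        unfold desLw
        apply Real.log_mul
        · nlinarith [norm_nonneg z]
        · nlinarith [norm_nonneg t]

lemma desB_lip (z z' t : ℂ) : |desB z t - desB z' t| ≤ ‖z - z'‖ := by
  unfold desB
  refine le_trans (logpos_lip' _ _ (norm_nonneg _) (norm_nonneg _)) ?_
  have := abs_norm_sub_norm_le (z - t) (z' - t)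
  have heq : (z - t) - (z' - t) = z - z' := by ring
  rw [heq] at this
  exact this

lemma desB_lipt (z t t' : ℂ) : |desB z t - desB z t'| ≤ ‖t - t'‖ := by
  unfold desB
  refine le_trans (logpos_lip' _ _ (norm_nonneg _) (norm_nonneg _)) ?_
  have := abs_norm_sub_norm_le (z - t) (z - t')
  have heq : (z - t) - (z - t') = t' - t := by ring
  rw [heq, norm_sub_rev t' t] at this
  exact this

lemma desB_cont (z : ℂ) : Continuous (fun t => desB z t) := by
  have : LipschitzWith 1 (fun t => desB z t) := by
    apply LipschitzWith.of_dist_le_mul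
    intro t t'
    rw [Real.dist_eq, Complex.dist_eq]
    simpa using desB_lipt z t t'
  exact this.continuous

lemma des_lw_finite (ν : Measure ℂ) [IsFiniteMeasure ν] {K : Set ℂ} (hK : IsCompact K)
    (hb : ∫⁻ t in Kᶜ, ENNReal.ofReal (desLw t) ∂ν ≤ ENNReal.ofReal 1) :
    ∫⁻ t, ENNReal.ofReal (desLw t) ∂ν < ⊤ := by
  obtain ⟨R₀, hR₀⟩ := hK.isBounded.subset_closedBall 0
  set R := max R₀ 0 with hRdef
  have hKR : K ⊆ Metric.closedBall 0 R :=
    subset_trans hR₀ (Metric.closedBall_subset_closedBall (le_max_left _ _))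
  rw [← lintegral_add_compl (fun t => ENNReal.ofReal (desLw t)) (measurableSet_closedBall (x := (0:ℂ)) (ε := R))]
  apply ENNReal.add_lt_top.mpr
  constructor
  · have hball : ∫⁻ t in Metric.closedBall 0 R, ENNReal.ofReal (desLw t) ∂ν
        ≤ ∫⁻ _ in Metric.closedBall (0:ℂ) R, ENNReal.ofReal (Real.log (1 + R)) ∂ν := by
      apply setLIntegral_mono measurable_const
      intro t ht
      apply ENNReal.ofReal_le_ofReal
      unfold desLw
      apply Real.log_le_log (by positivity)
      have : ‖t‖ ≤ R := by
        simpa [Complex.dist_eq] using (Metric.mem_closedBall.mp ht)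
      linarith
    refine lt_of_le_of_lt hball ?_
    rw [setLIntegral_const]
    exact ENNReal.mul_lt_top ENNReal.ofReal_lt_top (measure_lt_top ν _)
  · refine lt_of_le_of_lt (lintegral_mono_set (Set.compl_subset_compl.mpr hKR)) ?_
    exact lt_of_le_of_lt hb (by simp [ENNReal.ofReal_lt_top])

lemma des_lw_integrable (ν : Measure ℂ) [IsFiniteMeasure ν]
    (hlw : ∫⁻ t, ENNReal.ofReal (desLw t) ∂ν < ⊤) :
    Integrable desLw ν := by
  constructor
  · exact desLw_continuous.aestronglyMeasurable
  · rw [HasFiniteIntegral]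
    have : ∀ t, ‖desLw t‖ₑ = ENNReal.ofReal (desLw t) := fun t =>
      Real.enorm_eq_ofReal (desLw_nonneg t)
    simpa [this] using hlw

lemma des_bker_integrable (ν : Measure ℂ) [IsFiniteMeasure ν]
    (hlw : ∫⁻ t, ENNReal.ofReal (desLw t) ∂ν < ⊤) (z : ℂ) :
    Integrable (fun t => desB z t) ν := by
  apply Integrable.mono' ((integrable_const (Real.log (1 + ‖z‖))).add
    (des_lw_integrable ν hlw)) (desB_cont z).aestronglyMeasurable
  apply Filter.Eventually.of_forall
  intro t
  rw [Real.norm_eq_abs, abs_of_nonneg (desB_nonneg z t)]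
  exact desB_le z t


lemma des_mass_bound (μseq : ℕ → Measure ℂ) (μ : Measure ℂ) [IsFiniteMeasure μ]
    (hfin : ∀ n, IsFiniteMeasure (μseq n))
    (hlogtight : ∀ ε : ℝ, 0 < ε → ∃ K : Set ℂ, IsCompact K ∧ ∀ n,
      (∫⁻ t in Kᶜ, ENNReal.ofReal (Real.log (1 + ‖t‖)) ∂(μseq n))
        ≤ ENNReal.ofReal ε)
    (hweak : ∀ f : ℂ → ℝ, Continuous f → HasCompactSupport f →
      Tendsto (fun n => ∫ t, f t ∂(μseq n)) atTop (nhds (∫ t, f t ∂μ))) :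
    ∃ Cm : ℝ≥0∞, Cm ≠ ⊤ ∧ ∀ᶠ n in atTop, μseq n Set.univ ≤ Cm := by
  obtain ⟨K, hK, hKb⟩ := hlogtight 1 one_pos
  obtain ⟨R₀, hR₀⟩ := hK.isBounded.subset_closedBall 0
  set R := max R₀ 2 with hRdef
  have hKR : K ⊆ Metric.closedBall 0 R :=
    subset_trans hR₀ (Metric.closedBall_subset_closedBall (le_max_left _ _))
  have hS_tail : ∀ n, μseq n (Metric.closedBall (0:ℂ) R)ᶜ ≤ 1 := by
    intro n
    calc μseq n (Metric.closedBall (0:ℂ) R)ᶜ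
        = ∫⁻ _ in (Metric.closedBall (0:ℂ) R)ᶜ, 1 ∂(μseq n) := (setLIntegral_one _).symm
      _ ≤ ∫⁻ t in (Metric.closedBall (0:ℂ) R)ᶜ, ENNReal.ofReal (desLw t) ∂(μseq n) := by
          apply setLIntegral_mono desLw_measurable
          intro t ht
          have h2 : (2:ℝ) ≤ ‖t‖ := by
            have : R < dist t 0 := by
              by_contra h
              exact ht (Metric.mem_closedBall.mpr (le_of_not_gt h))
            rw [Complex.dist_eq, sub_zero] at this
            calc (2:ℝ) ≤ R := le_max_right _ _
            _ ≤ ‖t‖ := this.le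
          have h3 : (1:ℝ) ≤ desLw t := by
            unfold desLw
            rw [Real.le_log_iff_exp_le (by linarith)]
            have := Real.exp_one_lt_d9
            linarith
          calc (1:ℝ≥0∞) = ENNReal.ofReal 1 := by simp
          _ ≤ ENNReal.ofReal (desLw t) := ENNReal.ofReal_le_ofReal h3
      _ ≤ ∫⁻ t in Kᶜ, ENNReal.ofReal (desLw t) ∂(μseq n) :=
          lintegral_mono_set (Set.compl_subset_compl.mpr hKR)
      _ ≤ 1 := by simpa [desLw] using hKb n
  set g := desChi R with hgdef
  have hgint : ∀ (ν : Measure ℂ) [IsFiniteMeasure ν], Integrable g ν := fun ν _ =>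
    (desChi_continuous R).integrable_of_hasCompactSupport (desChi_hasCompactSupport R)
  have hball : ∀ n, (μseq n (Metric.closedBall (0:ℂ) R)).toReal ≤ ∫ t, g t ∂(μseq n) := by
    intro n
    haveI := hfin n
    rw [← measureReal_def, ← integral_indicator_one (measurableSet_closedBall (x := (0:ℂ)) (ε := R))]
    apply integral_mono ((integrable_const (1:ℝ)).indicator measurableSet_closedBall) (hgint _)
    intro t
    by_cases ht : t ∈ Metric.closedBall (0:ℂ) R
    · rw [Set.indicator_of_mem ht]
      have : ‖t‖ ≤ R := by simpa [Complex.dist_eq] using Metric.mem_closedBall.mp ht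
      simp [hgdef, desChi_eq_one this]
    · rw [Set.indicator_of_notMem ht]
      exact desChi_nonneg R t
  have hgev : ∀ᶠ n in atTop, ∫ t, g t ∂(μseq n) ≤ ∫ t, g t ∂μ + 1 := by
    have := (hweak g (desChi_continuous R) (desChi_hasCompactSupport R)).eventually_lt_const
      (lt_add_one (∫ t, g t ∂μ))
    exact this.mono fun n hn => hn.le
  refine ⟨ENNReal.ofReal (∫ t, g t ∂μ + 1) + 1, by simp [ENNReal.ofReal_ne_top], ?_⟩
  filter_upwards [hgev] with n hn
  haveI := hfin n
  have hsplit : μseq n Set.univ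
      = μseq n (Metric.closedBall (0:ℂ) R) + μseq n (Metric.closedBall (0:ℂ) R)ᶜ :=
    (measure_add_measure_compl measurableSet_closedBall).symm
  rw [hsplit]
  apply add_le_add _ (hS_tail n)
  rw [← ENNReal.ofReal_toReal (measure_ne_top (μseq n) _)]
  exact ENNReal.ofReal_le_ofReal (le_trans (hball n) hn)

/-- Workhorse: convergence of integrals of a jointly-controlled kernel along the weak-*
convergent sequence with moving second argument. -/
lemma des_workhorse (μseq : ℕ → Measure ℂ) (μ : Measure ℂ) [IsFiniteMeasure μ]
    (hfin : ∀ n, IsFiniteMeasure (μseq n))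
    {Cm : ℝ≥0∞} (hCm : Cm ≠ ⊤) (hCmev : ∀ᶠ n in atTop, μseq n Set.univ ≤ Cm)
    (hweak : ∀ f : ℂ → ℝ, Continuous f → HasCompactSupport f →
      Tendsto (fun n => ∫ t, f t ∂(μseq n)) atTop (nhds (∫ t, f t ∂μ)))
    {w : ℕ → ℂ} {wstar : ℂ} (hw : Tendsto w atTop (nhds wstar))
    (f : ℂ → ℂ → ℝ) (L : ℝ) (hL : 0 ≤ L)
    (hfc : ∀ z, Continuous (f z)) (hfs : ∀ z, HasCompactSupport (f z))
    (hfl : ∀ z z' t, |f z t - f z' t| ≤ L * ‖z - z'‖) :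
    Tendsto (fun n => ∫ t, f (w n) t ∂(μseq n)) atTop (nhds (∫ t, f wstar t ∂μ)) := by
  have hint : ∀ z n, Integrable (f z) (μseq n) := fun z n => by
    haveI := hfin n
    exact (hfc z).integrable_of_hasCompactSupport (hfs z)
  have h1 : Tendsto (fun n => ∫ t, f wstar t ∂(μseq n)) atTop (nhds (∫ t, f wstar t ∂μ)) :=
    hweak _ (hfc wstar) (hfs wstar)
  have habs : Tendsto (fun n => L * Cm.toReal * ‖w n - wstar‖) atTop (nhds 0) := by
    have : Tendsto (fun n => ‖w n - wstar‖) atTop (nhds 0) := by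
      have h0 : Tendsto (fun n => w n - wstar) atTop (nhds 0) := by
        simpa using hw.sub_const wstar
      have := (continuous_norm.tendsto (0:ℂ)).comp h0
      rw [norm_zero] at this
      exact this
    simpa using this.const_mul (L * Cm.toReal)
  have h2 : Tendsto (fun n => ∫ t, f (w n) t ∂(μseq n) - ∫ t, f wstar t ∂(μseq n))
      atTop (nhds 0) := by
    apply squeeze_zero_norm' _ habs
    filter_upwards [hCmev] with n hn
    haveI := hfin n
    rw [← integral_sub (hint (w n) n) (hint wstar n)]
    calc ‖∫ t, f (w n) t - f wstar t ∂(μseq n)‖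
        ≤ L * ‖w n - wstar‖ * (μseq n Set.univ).toReal := by
          apply norm_integral_le_of_norm_le_const
          apply Filter.Eventually.of_forall
          intro t
          rw [Real.norm_eq_abs]
          exact hfl (w n) wstar t
      _ ≤ L * ‖w n - wstar‖ * Cm.toReal := by
          apply mul_le_mul_of_nonneg_left (ENNReal.toReal_mono hCm hn)
          positivity
      _ = L * Cm.toReal * ‖w n - wstar‖ := by ring
  have := h2.add h1
  rw [zero_add] at this
  apply this.congr
  intro n
  ring


lemma ofReal_max0 (x : ℝ) : ENNReal.ofReal (max x 0) = ENNReal.ofReal x := by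
  rcases le_total x 0 with h | h
  · rw [max_eq_right h, ENNReal.ofReal_of_nonpos h]; simp
  · rw [max_eq_left h]

lemma des_psi_sup (z t : ℂ) :
    ⨆ k : ℕ, ENNReal.ofReal (desPsi ((k:ℝ)+1) z t)
      = ENNReal.ofReal (-Real.log (‖z - t‖)) := by
  rcases eq_or_lt_of_le (norm_nonneg (z - t)) with h0 | h0
  · have hz : ∀ k : ℕ, desPsi ((k:ℝ)+1) z t = 0 := fun k => by
      unfold desPsi; rw [← h0]; exact desF_zero (by positivity)
    simp [hz, ← h0, Real.log_zero]
  · set r := ‖z - t‖ with hrdef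
    set q := max (-Real.log r) 0 with hqdef
    have hq0 : 0 ≤ q := le_max_right _ _
    obtain ⟨k, hk⟩ := exists_nat_ge (max q (q / r))
    have hofq : ENNReal.ofReal q = ENNReal.ofReal (-Real.log r) := ofReal_max0 _
    apply le_antisymm
    · apply iSup_le; intro j
      rw [← hofq]
      exact ENNReal.ofReal_le_ofReal (desF_le_logpos _ _)
    · have h1 : q ≤ (k:ℝ)+1 := le_trans (le_max_left _ _) (by linarith)
      have h2 : q ≤ ((k:ℝ)+1)^2 * r := by
        have : q / r ≤ (k:ℝ) := le_trans (le_max_right _ _) hk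
        have hqr : q ≤ (k:ℝ) * r := by
          rw [div_le_iff₀ h0] at this; linarith
        have hk0 : (0:ℝ) ≤ (k:ℝ) := Nat.cast_nonneg k
        nlinarith [hk0, h0, hqr]
      have heq : desPsi ((k:ℝ)+1) z t = q := desF_eq_logpos h1 h2
      rw [← hofq, ← heq]
      exact le_iSup (fun k : ℕ => ENNReal.ofReal (desPsi ((k:ℝ)+1) z t)) k

lemma des_A (μseq : ℕ → Measure ℂ) (μ : Measure ℂ) [IsFiniteMeasure μ]
    (hfin : ∀ n, IsFiniteMeasure (μseq n))
    {Cm : ℝ≥0∞} (hCm : Cm ≠ ⊤) (hCmev : ∀ᶠ n in atTop, μseq n Set.univ ≤ Cm)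
    (hweak : ∀ f : ℂ → ℝ, Continuous f → HasCompactSupport f →
      Tendsto (fun n => ∫ t, f t ∂(μseq n)) atTop (nhds (∫ t, f t ∂μ)))
    {w : ℕ → ℂ} {wstar : ℂ} (hw : Tendsto w atTop (nhds wstar)) :
    ∫⁻ t, ENNReal.ofReal (-Real.log (‖wstar - t‖)) ∂μ
      ≤ liminf (fun n => ∫⁻ t, ENNReal.ofReal (-Real.log (‖w n - t‖)) ∂(μseq n))
          atTop := by
  have hmct : ∫⁻ t, ENNReal.ofReal (-Real.log (‖wstar - t‖)) ∂μ
      = ⨆ k : ℕ, ∫⁻ t, ENNReal.ofReal (desPsi ((k:ℝ)+1) wstar t) ∂μ := by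
    rw [← lintegral_iSup]
    · apply lintegral_congr
      intro t
      exact (des_psi_sup wstar t).symm
    · intro k
      exact ENNReal.measurable_ofReal.comp (desPsi_cont (by positivity) wstar).measurable
    · intro k j hkj t
      apply ENNReal.ofReal_le_ofReal
      apply desF_mono (by positivity) _ (norm_nonneg _)
      have : (k:ℝ) ≤ (j:ℝ) := Nat.cast_le.mpr hkj
      linarith
  rw [hmct]
  apply iSup_le
  intro k
  set M := ((k:ℝ)+1) with hMdef
  have hM : (0:ℝ) ≤ M := by positivity
  have hL : (0:ℝ) ≤ max (M^2) (Real.exp M) := le_trans (Real.exp_pos M).le (le_max_right _ _)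
  have hconv := des_workhorse μseq μ hfin hCm hCmev hweak hw
    (fun z t => desPsi M z t) (max (M^2) (Real.exp M)) hL
    (fun z => desPsi_cont hM z) (fun z => desPsi_hcs hM z)
    (fun z z' t => desPsi_lipz hM z z' t)
  have hint : Integrable (fun t => desPsi M wstar t) μ :=
    (desPsi_cont hM wstar).integrable_of_hasCompactSupport (desPsi_hcs hM wstar)
  have heq : ∫⁻ t, ENNReal.ofReal (desPsi M wstar t) ∂μ
      = ENNReal.ofReal (∫ t, desPsi M wstar t ∂μ) :=
    (ofReal_integral_eq_lintegral_ofReal hint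
      (Filter.Eventually.of_forall fun t => desF_nonneg hM (norm_nonneg _))).symm
  rw [heq]
  have hle : ∀ n, ENNReal.ofReal (∫ t, desPsi M (w n) t ∂(μseq n))
      ≤ ∫⁻ t, ENNReal.ofReal (-Real.log (‖w n - t‖)) ∂(μseq n) := by
    intro n
    haveI := hfin n
    rw [ofReal_integral_eq_lintegral_ofReal
      ((desPsi_cont hM (w n)).integrable_of_hasCompactSupport (desPsi_hcs hM (w n)))
      (Filter.Eventually.of_forall fun t => desF_nonneg hM (norm_nonneg _))]
    apply lintegral_mono
    intro t
    calc ENNReal.ofReal (desPsi M (w n) t)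
        ≤ ENNReal.ofReal (max (-Real.log (‖w n - t‖)) 0) :=
          ENNReal.ofReal_le_ofReal (desF_le_logpos _ _)
      _ = ENNReal.ofReal (-Real.log (‖w n - t‖)) := ofReal_max0 _
  have htend : Tendsto (fun n => ENNReal.ofReal (∫ t, desPsi M (w n) t ∂(μseq n))) atTop
      (nhds (ENNReal.ofReal (∫ t, desPsi M wstar t ∂μ))) :=
    (ENNReal.continuous_ofReal.tendsto _).comp hconv
  calc ENNReal.ofReal (∫ t, desPsi M wstar t ∂μ)
      = liminf (fun n => ENNReal.ofReal (∫ t, desPsi M (w n) t ∂(μseq n))) atTop :=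
        htend.liminf_eq.symm
    _ ≤ liminf (fun n => ∫⁻ t, ENNReal.ofReal (-Real.log (‖w n - t‖)) ∂(μseq n))
          atTop := liminf_le_liminf (Filter.Eventually.of_forall hle)


lemma des_lw_mu (μseq : ℕ → Measure ℂ) (μ : Measure ℂ) [IsFiniteMeasure μ]
    (hfin : ∀ n, IsFiniteMeasure (μseq n))
    (hlogtight : ∀ ε : ℝ, 0 < ε → ∃ K : Set ℂ, IsCompact K ∧ ∀ n,
      (∫⁻ t in Kᶜ, ENNReal.ofReal (Real.log (1 + ‖t‖)) ∂(μseq n))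
        ≤ ENNReal.ofReal ε)
    {Cm : ℝ≥0∞} (hCm : Cm ≠ ⊤) (hCmev : ∀ᶠ n in atTop, μseq n Set.univ ≤ Cm)
    (hweak : ∀ f : ℂ → ℝ, Continuous f → HasCompactSupport f →
      Tendsto (fun n => ∫ t, f t ∂(μseq n)) atTop (nhds (∫ t, f t ∂μ))) :
    ∫⁻ t, ENNReal.ofReal (desLw t) ∂μ < ⊤ := by
  obtain ⟨K, hK, hKb⟩ := hlogtight 1 one_pos
  obtain ⟨R₁, hR₁⟩ := hK.isBounded.subset_closedBall 0
  set R := max R₁ 0 with hRdef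
  have hR0 : (0:ℝ) ≤ R := le_max_right _ _
  have hKR : K ⊆ Metric.closedBall 0 R :=
    subset_trans hR₁ (Metric.closedBall_subset_closedBall (le_max_left _ _))
  set M₀ : ℝ := Real.log (1+R) * Cm.toReal + 1 with hM₀def
  have hgcont : ∀ S : ℕ, Continuous (fun t => desLw t * desChi S t) := fun S =>
    desLw_continuous.mul (desChi_continuous S)
  have hghcs : ∀ S : ℕ, HasCompactSupport (fun t => desLw t * desChi S t) := fun S =>
    (desChi_hasCompactSupport S).mul_left
  have hclaim : ∀ S : ℕ, ∫ t, desLw t * desChi (S:ℝ) t ∂μ ≤ M₀ := by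
    intro S
    apply le_of_tendsto (hweak _ (hgcont S) (hghcs S))
    filter_upwards [hCmev] with n hn
    haveI := hfin n
    have hnn : 0 ≤ᶠ[ae (μseq n)] fun t => desLw t * desChi (S:ℝ) t :=
      Filter.Eventually.of_forall fun t => mul_nonneg (desLw_nonneg t) (desChi_nonneg _ t)
    have hint : Integrable (fun t => desLw t * desChi (S:ℝ) t) (μseq n) :=
      (hgcont S).integrable_of_hasCompactSupport (hghcs S)
    have heq := ofReal_integral_eq_lintegral_ofReal hint hnn
    have hlin : ∫⁻ t, ENNReal.ofReal (desLw t * desChi (S:ℝ) t) ∂(μseq n)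
        ≤ ENNReal.ofReal (Real.log (1+R)) * Cm + ENNReal.ofReal 1 := by
      rw [← lintegral_add_compl (fun t => ENNReal.ofReal (desLw t * desChi (S:ℝ) t))
        (measurableSet_closedBall (x := (0:ℂ)) (ε := R))]
      apply add_le_add
      · calc ∫⁻ t in Metric.closedBall (0:ℂ) R, ENNReal.ofReal (desLw t * desChi (S:ℝ) t) ∂(μseq n)
            ≤ ∫⁻ _ in Metric.closedBall (0:ℂ) R, ENNReal.ofReal (Real.log (1+R)) ∂(μseq n) := by
              apply setLIntegral_mono measurable_const
              intro t ht
              apply ENNReal.ofReal_le_ofReal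
              have habs : ‖t‖ ≤ R := by
                simpa [Complex.dist_eq] using Metric.mem_closedBall.mp ht
              calc desLw t * desChi (S:ℝ) t ≤ desLw t * 1 :=
                    mul_le_mul_of_nonneg_left (desChi_le_one _ t) (desLw_nonneg t)
                _ = desLw t := mul_one _
                _ ≤ Real.log (1+R) := Real.log_le_log (by positivity) (by linarith)
          _ = ENNReal.ofReal (Real.log (1+R)) * μseq n (Metric.closedBall (0:ℂ) R) :=
              setLIntegral_const _ _
          _ ≤ ENNReal.ofReal (Real.log (1+R)) * Cm := by
              apply mul_le_mul_right (le_trans (measure_mono (Set.subset_univ _)) hn)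
      · calc ∫⁻ t in (Metric.closedBall (0:ℂ) R)ᶜ, ENNReal.ofReal (desLw t * desChi (S:ℝ) t) ∂(μseq n)
            ≤ ∫⁻ t in (Metric.closedBall (0:ℂ) R)ᶜ, ENNReal.ofReal (desLw t) ∂(μseq n) := by
              apply setLIntegral_mono desLw_measurable
              intro t _
              apply ENNReal.ofReal_le_ofReal
              calc desLw t * desChi (S:ℝ) t ≤ desLw t * 1 :=
                    mul_le_mul_of_nonneg_left (desChi_le_one _ t) (desLw_nonneg t)
                _ = desLw t := mul_one _
          _ ≤ ∫⁻ t in Kᶜ, ENNReal.ofReal (desLw t) ∂(μseq n) :=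
              lintegral_mono_set (Set.compl_subset_compl.mpr hKR)
          _ ≤ ENNReal.ofReal 1 := by simpa [desLw] using hKb n
    have hne : ENNReal.ofReal (Real.log (1+R)) * Cm + ENNReal.ofReal 1 ≠ ⊤ := by
      apply ENNReal.add_ne_top.mpr
      exact ⟨ENNReal.mul_ne_top ENNReal.ofReal_ne_top hCm, ENNReal.ofReal_ne_top⟩
    have hle2 : ENNReal.ofReal (∫ t, desLw t * desChi (S:ℝ) t ∂(μseq n))
        ≤ ENNReal.ofReal (Real.log (1+R)) * Cm + ENNReal.ofReal 1 := by
      rw [heq]; exact hlin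
    have := ENNReal.toReal_mono hne hle2
    rw [ENNReal.toReal_ofReal (integral_nonneg fun t =>
      mul_nonneg (desLw_nonneg t) (desChi_nonneg _ t))] at this
    refine le_trans this ?_
    rw [ENNReal.toReal_add (ENNReal.mul_ne_top ENNReal.ofReal_ne_top hCm) ENNReal.ofReal_ne_top,
      ENNReal.toReal_mul, ENNReal.toReal_ofReal (Real.log_nonneg (by linarith)),
      ENNReal.toReal_ofReal zero_le_one]
  have hsup : ∫⁻ t, ENNReal.ofReal (desLw t) ∂μ
      = ⨆ S : ℕ, ∫⁻ t, ENNReal.ofReal (desLw t * desChi (S:ℝ) t) ∂μ := by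
    rw [← lintegral_iSup]
    · apply lintegral_congr
      intro t
      obtain ⟨S, hS⟩ := exists_nat_ge (‖t‖)
      apply le_antisymm
      · calc ENNReal.ofReal (desLw t) = ENNReal.ofReal (desLw t * desChi (S:ℝ) t) := by
              rw [desChi_eq_one hS, mul_one]
          _ ≤ ⨆ S : ℕ, ENNReal.ofReal (desLw t * desChi (S:ℝ) t) :=
              le_iSup (fun S : ℕ => ENNReal.ofReal (desLw t * desChi (S:ℝ) t)) S
      · apply iSup_le
        intro j
        apply ENNReal.ofReal_le_ofReal
        calc desLw t * desChi (j:ℝ) t ≤ desLw t * 1 :=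
              mul_le_mul_of_nonneg_left (desChi_le_one _ t) (desLw_nonneg t)
          _ = desLw t := mul_one _
    · intro S
      exact ENNReal.measurable_ofReal.comp ((hgcont S).measurable)
    · intro i j hij t
      apply ENNReal.ofReal_le_ofReal
      exact mul_le_mul_of_nonneg_left (desChi_mono (by exact_mod_cast hij) t) (desLw_nonneg t)
  rw [hsup]
  have hfinal : (⨆ S : ℕ, ∫⁻ t, ENNReal.ofReal (desLw t * desChi (S:ℝ) t) ∂μ)
      ≤ ENNReal.ofReal M₀ := by
    apply iSup_le
    intro S
    rw [← ofReal_integral_eq_lintegral_ofReal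
      ((hgcont S).integrable_of_hasCompactSupport (hghcs S))
      (Filter.Eventually.of_forall fun t => mul_nonneg (desLw_nonneg t) (desChi_nonneg _ t))]
    exact ENNReal.ofReal_le_ofReal (hclaim S)
  exact lt_of_le_of_lt hfinal ENNReal.ofReal_lt_top


lemma des_B (μseq : ℕ → Measure ℂ) (μ : Measure ℂ) [IsFiniteMeasure μ]
    (hfin : ∀ n, IsFiniteMeasure (μseq n))
    (hlogtight : ∀ ε : ℝ, 0 < ε → ∃ K : Set ℂ, IsCompact K ∧ ∀ n,
      (∫⁻ t in Kᶜ, ENNReal.ofReal (Real.log (1 + ‖t‖)) ∂(μseq n))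
        ≤ ENNReal.ofReal ε)
    {Cm : ℝ≥0∞} (hCm : Cm ≠ ⊤) (hCmev : ∀ᶠ n in atTop, μseq n Set.univ ≤ Cm)
    (hweak : ∀ f : ℂ → ℝ, Continuous f → HasCompactSupport f →
      Tendsto (fun n => ∫ t, f t ∂(μseq n)) atTop (nhds (∫ t, f t ∂μ)))
    {w : ℕ → ℂ} {wstar : ℂ} (hw : Tendsto w atTop (nhds wstar))
    (hlwμ : ∫⁻ t, ENNReal.ofReal (desLw t) ∂μ < ⊤)
    (hlwn : ∀ n, ∫⁻ t, ENNReal.ofReal (desLw t) ∂(μseq n) < ⊤)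
    {ε : ℝ} (hε : 0 < ε) :
    ∀ᶠ n in atTop, ∫ t, desB (w n) t ∂(μseq n) ≤ ∫ t, desB wstar t ∂μ + ε := by
  set c := Real.log (2 + ‖wstar‖) with hcdef
  have hc0 : 0 < c := Real.log_pos (by linarith [norm_nonneg wstar])
  obtain ⟨K, hK, hKb⟩ := hlogtight (ε/4) (by positivity)
  obtain ⟨R₂, hR₂⟩ := hK.isBounded.subset_closedBall 0
  set R := max R₂ (Real.exp c) with hRdef
  have hR0 : (0:ℝ) < R := lt_of_lt_of_le (Real.exp_pos c) (le_max_right _ _)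
  have hKR : K ⊆ Metric.closedBall 0 R :=
    subset_trans hR₂ (Metric.closedBall_subset_closedBall (le_max_left _ _))
  have hcR : c ≤ Real.log (1 + R) := by
    calc c = Real.log (Real.exp c) := (Real.log_exp c).symm
    _ ≤ Real.log (1 + R) := Real.log_le_log (Real.exp_pos c)
        (by linarith [le_max_right R₂ (Real.exp c)])
  set S := (Metric.closedBall (0:ℂ) R)ᶜ with hSdef
  have hSmeas : MeasurableSet S := (measurableSet_closedBall (x := (0:ℂ)) (ε := R)).compl
  have hS_lw : ∀ t ∈ S, c ≤ desLw t := by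
    intro t ht
    have : R < dist t 0 := by
      by_contra h
      exact ht (Metric.mem_closedBall.mpr (le_of_not_gt h))
    rw [Complex.dist_eq, sub_zero] at this
    calc c ≤ Real.log (1 + R) := hcR
    _ ≤ desLw t := Real.log_le_log (by positivity) (by linarith)
  have hwev : ∀ᶠ n in atTop, ‖w n‖ ≤ ‖wstar‖ + 1 := by
    have htd : Tendsto (fun n => ‖w n‖) atTop (nhds (‖wstar‖)) :=
      (continuous_norm.tendsto wstar).comp hw
    exact (htd.eventually_lt_const (lt_add_one _)).mono fun n hn => hn.le
  -- the truncated kernel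
  have hbtil_cont : ∀ z, Continuous (fun t => desB z t * desChi R t) := fun z =>
    (desB_cont z).mul (desChi_continuous R)
  have hbtil_hcs : ∀ z, HasCompactSupport (fun t => desB z t * desChi R t) := fun z =>
    (desChi_hasCompactSupport R).mul_left
  have hbtil_lip : ∀ z z' t, |desB z t * desChi R t - desB z' t * desChi R t|
      ≤ 1 * ‖z - z'‖ := by
    intro z z' t
    have : desB z t * desChi R t - desB z' t * desChi R t
        = (desB z t - desB z' t) * desChi R t := by ring
    rw [this, abs_mul, one_mul, abs_of_nonneg (desChi_nonneg R t)]
    calc |desB z t - desB z' t| * desChi R t ≤ |desB z t - desB z' t| * 1 :=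
          mul_le_mul_of_nonneg_left (desChi_le_one R t) (abs_nonneg _)
    _ = |desB z t - desB z' t| := mul_one _
    _ ≤ ‖z - z'‖ := desB_lip z z' t
  have hconv := des_workhorse μseq μ hfin hCm hCmev hweak hw
    (fun z t => desB z t * desChi R t) 1 zero_le_one hbtil_cont hbtil_hcs hbtil_lip
  have hβB : ∫ t, desB wstar t * desChi R t ∂μ ≤ ∫ t, desB wstar t ∂μ := by
    apply integral_mono
      ((hbtil_cont wstar).integrable_of_hasCompactSupport (hbtil_hcs wstar))
      (des_bker_integrable μ hlwμ wstar)
    intro t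
    calc desB wstar t * desChi R t ≤ desB wstar t * 1 :=
          mul_le_mul_of_nonneg_left (desChi_le_one R t) (desB_nonneg wstar t)
    _ = desB wstar t := mul_one _
  have hev1 : ∀ᶠ n in atTop, ∫ t, desB (w n) t * desChi R t ∂(μseq n)
      ≤ ∫ t, desB wstar t * desChi R t ∂μ + ε/4 :=
    (hconv.eventually_lt_const (lt_add_of_pos_right _ (by positivity))).mono
      fun n hn => hn.le
  -- tail estimate
  have hev2 : ∀ᶠ n in atTop, ∫ t, desB (w n) t * (1 - desChi R t) ∂(μseq n) ≤ ε/2 := by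
    filter_upwards [hwev] with n hn
    haveI := hfin n
    have hBc : ∀ t, desB (w n) t ≤ c + desLw t := by
      intro t
      calc desB (w n) t ≤ Real.log (1 + ‖w n‖) + desLw t := desB_le (w n) t
      _ ≤ c + desLw t := by
          have : Real.log (1 + ‖w n‖) ≤ c :=
            Real.log_le_log (by positivity) (by linarith)
          linarith
    have hload : ∀ t, desB (w n) t * (1 - desChi R t)
        ≤ S.indicator (fun t => c + desLw t) t := by
      intro t
      by_cases ht : t ∈ S
      · rw [Set.indicator_of_mem ht]
        calc desB (w n) t * (1 - desChi R t) ≤ desB (w n) t * 1 := by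
              apply mul_le_mul_of_nonneg_left _ (desB_nonneg _ t)
              linarith [desChi_nonneg R t]
        _ = desB (w n) t := mul_one _
        _ ≤ c + desLw t := hBc t
      · rw [Set.indicator_of_notMem ht]
        have habs : ‖t‖ ≤ R := by
          have := Set.notMem_compl_iff.mp ht
          simpa [Complex.dist_eq] using Metric.mem_closedBall.mp this
        rw [desChi_eq_one habs]
        simp
    have hint_ind : Integrable (S.indicator (fun t => c + desLw t)) (μseq n) :=
      ((integrable_const c).add (des_lw_integrable _ (hlwn n))).indicator hSmeas
    have hint_lhs : Integrable (fun t => desB (w n) t * (1 - desChi R t)) (μseq n) := by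
      have : (fun t => desB (w n) t * (1 - desChi R t))
          = fun t => desB (w n) t - desB (w n) t * desChi R t := by
        funext t; ring
      rw [this]
      exact (des_bker_integrable _ (hlwn n) (w n)).sub
        ((hbtil_cont (w n)).integrable_of_hasCompactSupport (hbtil_hcs (w n)))
    calc ∫ t, desB (w n) t * (1 - desChi R t) ∂(μseq n)
        ≤ ∫ t, S.indicator (fun t => c + desLw t) t ∂(μseq n) :=
          integral_mono hint_lhs hint_ind hload
      _ ≤ ε/2 := by
          have hnn : 0 ≤ᶠ[ae (μseq n)] S.indicator (fun t => c + desLw t) :=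
            Filter.Eventually.of_forall fun t => Set.indicator_nonneg
              (fun x _ => by linarith [desLw_nonneg x]) t
          rw [integral_eq_lintegral_of_nonneg_ae hnn
            ((aestronglyMeasurable_const.add desLw_continuous.aestronglyMeasurable).indicator
              hSmeas)]
          have hlint : ∫⁻ t, ENNReal.ofReal (S.indicator (fun t => c + desLw t) t) ∂(μseq n)
              ≤ ENNReal.ofReal (ε/2) := by
            have hpt : ∀ t, ENNReal.ofReal (S.indicator (fun t => c + desLw t) t)
                = S.indicator (fun t => ENNReal.ofReal (c + desLw t)) t := by
              intro t
              by_cases ht : t ∈ S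
              · rw [Set.indicator_of_mem ht, Set.indicator_of_mem ht]
              · rw [Set.indicator_of_notMem ht, Set.indicator_of_notMem ht]; simp
            rw [lintegral_congr hpt, lintegral_indicator hSmeas]
            have hsplit : ∀ t, ENNReal.ofReal (c + desLw t)
                = ENNReal.ofReal c + ENNReal.ofReal (desLw t) := fun t =>
              ENNReal.ofReal_add hc0.le (desLw_nonneg t)
            rw [setLIntegral_congr_fun hSmeas (fun t _ => hsplit t)]
            rw [lintegral_add_left measurable_const]
            have htail : ∫⁻ t in S, ENNReal.ofReal (desLw t) ∂(μseq n)
                ≤ ENNReal.ofReal (ε/4) := by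
              refine le_trans (lintegral_mono_set (Set.compl_subset_compl.mpr hKR)) ?_
              simpa [desLw] using hKb n
            have hconst : ∫⁻ _ in S, ENNReal.ofReal c ∂(μseq n)
                ≤ ENNReal.ofReal (ε/4) := by
              calc ∫⁻ _ in S, ENNReal.ofReal c ∂(μseq n)
                  ≤ ∫⁻ t in S, ENNReal.ofReal (desLw t) ∂(μseq n) := by
                    apply setLIntegral_mono desLw_measurable
                    intro t ht
                    exact ENNReal.ofReal_le_ofReal (hS_lw t ht)
                _ ≤ ENNReal.ofReal (ε/4) := htail
            calc ∫⁻ _ in S, ENNReal.ofReal c ∂(μseq n)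
                  + ∫⁻ t in S, ENNReal.ofReal (desLw t) ∂(μseq n)
                ≤ ENNReal.ofReal (ε/4) + ENNReal.ofReal (ε/4) := add_le_add hconst htail
              _ = ENNReal.ofReal (ε/2) := by
                  rw [← ENNReal.ofReal_add (by positivity) (by positivity)]
                  congr 1
                  ring
          calc (∫⁻ t, ENNReal.ofReal (S.indicator (fun t => c + desLw t) t) ∂(μseq n)).toReal
              ≤ (ENNReal.ofReal (ε/2)).toReal := ENNReal.toReal_mono ENNReal.ofReal_ne_top hlint
            _ = ε/2 := ENNReal.toReal_ofReal (by positivity)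
  -- combine
  filter_upwards [hev1, hev2] with n h1 h2
  haveI := hfin n
  have hsplit : ∫ t, desB (w n) t ∂(μseq n)
      = ∫ t, desB (w n) t * desChi R t ∂(μseq n)
        + ∫ t, desB (w n) t * (1 - desChi R t) ∂(μseq n) := by
    rw [← integral_add ((hbtil_cont (w n)).integrable_of_hasCompactSupport (hbtil_hcs (w n)))]
    · apply integral_congr_ae
      apply Filter.Eventually.of_forall
      intro t
      ring
    · have : (fun t => desB (w n) t * (1 - desChi R t))
          = fun t => desB (w n) t - desB (w n) t * desChi R t := by
        funext t; ring
      rw [this]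
      exact (des_bker_integrable _ (hlwn n) (w n)).sub
        ((hbtil_cont (w n)).integrable_of_hasCompactSupport (hbtil_hcs (w n)))
  rw [hsplit]
  linarith



lemma des_main (μseq : ℕ → Measure ℂ) (μ : Measure ℂ) [IsFiniteMeasure μ]
    (hfin : ∀ n, IsFiniteMeasure (μseq n))
    (hlogtight : ∀ ε : ℝ, 0 < ε → ∃ K : Set ℂ, IsCompact K ∧ ∀ n,
      (∫⁻ t in Kᶜ, ENNReal.ofReal (Real.log (1 + ‖t‖)) ∂(μseq n))
        ≤ ENNReal.ofReal ε)
    (hweak : ∀ f : ℂ → ℝ, Continuous f → HasCompactSupport f →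
      Tendsto (fun n => ∫ t, f t ∂(μseq n)) atTop (nhds (∫ t, f t ∂μ)))
    {w : ℕ → ℂ} {wstar : ℂ} (hw : Tendsto w atTop (nhds wstar)) :
    logPot μ wstar ≤ liminf (fun n => logPot (μseq n) (w n)) atTop := by
  obtain ⟨Cm, hCm, hCmev⟩ := des_mass_bound μseq μ hfin hlogtight hweak
  have hlwn : ∀ n, ∫⁻ t, ENNReal.ofReal (desLw t) ∂(μseq n) < ⊤ := by
    obtain ⟨K, hK, hKb⟩ := hlogtight 1 one_pos
    intro n
    haveI := hfin n
    exact des_lw_finite (μseq n) hK (by simpa [desLw] using hKb n)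
  have hlwμ := des_lw_mu μseq μ hfin hlogtight hCm hCmev hweak
  have hA := des_A μseq μ hfin hCm hCmev hweak hw
  set A := ∫⁻ t, ENNReal.ofReal (-Real.log (‖wstar - t‖)) ∂μ with hAdef
  set B := ∫ t, max (Real.log (‖wstar - t‖)) 0 ∂μ with hBdef
  have hBeq : B = ∫ t, desB wstar t ∂μ := rfl
  have hlogeq : ∀ (ν : Measure ℂ) (z : ℂ), logPot ν z
      = ((∫⁻ t, ENNReal.ofReal (-Real.log (‖z - t‖)) ∂ν : ℝ≥0∞) : EReal)
        - ((∫ t, desB z t ∂ν : ℝ) : EReal) := fun ν z => rfl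
  rw [Filter.le_liminf_iff]
  intro y hy
  by_cases hAtop : A = ⊤
  · have hLA : liminf (fun n =>
        ∫⁻ t, ENNReal.ofReal (-Real.log (‖w n - t‖)) ∂(μseq n)) atTop = ⊤ :=
      eq_top_iff.mpr (hAtop ▸ hA)
    have hy' : y < (⊤ : EReal) := by
      rw [hlogeq μ wstar, ← hBeq, ← hAdef, hAtop, EReal.coe_ennreal_top, EReal.top_sub_coe] at hy
      exact hy
    obtain ⟨r, hyr, -⟩ := EReal.lt_iff_exists_real_btwn.mp hy'
    have hev_B := des_B μseq μ hfin hlogtight hCm hCmev hweak hw hlwμ hlwn one_pos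
    have hev_A : ∀ᶠ n in atTop, ENNReal.ofReal (r + (B + 1)) <
        ∫⁻ t, ENNReal.ofReal (-Real.log (‖w n - t‖)) ∂(μseq n) :=
      eventually_lt_of_lt_liminf (by rw [hLA]; exact ENNReal.ofReal_lt_top)
    filter_upwards [hev_B, hev_A] with n h1 h2
    rw [hlogeq]
    refine lt_of_lt_of_le hyr ?_
    calc (r : EReal) = ((r + (B + 1) : ℝ) : EReal) - ((B + 1 : ℝ) : EReal) := by
          rw [← EReal.coe_sub]; norm_num
      _ ≤ ((ENNReal.ofReal (r + (B + 1)) : ℝ≥0∞) : EReal) - ((B + 1 : ℝ) : EReal) := by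
          apply EReal.sub_le_sub _ le_rfl
          rw [EReal.coe_ennreal_ofReal]
          exact_mod_cast le_max_left _ _
      _ ≤ _ := EReal.sub_le_sub
          (EReal.coe_ennreal_le_coe_ennreal_iff.mpr h2.le)
          (EReal.coe_le_coe_iff.mpr (by rw [hBeq]; exact h1))
  · set a := A.toReal with hadef
    have hcoeA : ((A : ℝ≥0∞) : EReal) = ((a : ℝ) : EReal) := by
      rw [hadef, ← EReal.toReal_coe_ennreal]
      exact (EReal.coe_toReal (by simpa using hAtop) (EReal.coe_ennreal_ne_bot A)).symm
    have hy' : y < ((a - B : ℝ) : EReal) := by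
      rw [hlogeq μ wstar, ← hBeq, ← hAdef, hcoeA, ← EReal.coe_sub] at hy
      exact hy
    obtain ⟨r, hyr, hr2⟩ := EReal.lt_iff_exists_real_btwn.mp hy'
    have hrab : r < a - B := EReal.coe_lt_coe_iff.mp hr2
    set ε := (a - B - r)/2 with hεdef
    have hεpos : 0 < ε := by rw [hεdef]; linarith
    have hsum : r + B + ε = a - ε := by rw [hεdef]; ring
    have hev_B := des_B μseq μ hfin hlogtight hCm hCmev hweak hw hlwμ hlwn hεpos
    have hev_A : ∀ᶠ n in atTop, ((r + B + ε : ℝ) : EReal) ≤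
        ((∫⁻ t, ENNReal.ofReal (-Real.log (‖w n - t‖)) ∂(μseq n) : ℝ≥0∞) : EReal) := by
      by_cases hsgn : r + B + ε < 0
      · apply Filter.Eventually.of_forall
        intro n
        refine le_trans ?_ (EReal.coe_ennreal_nonneg _)
        exact_mod_cast hsgn.le
      · push_neg at hsgn
        have hlt : ENNReal.ofReal (r + B + ε) < A := by
          rw [ENNReal.ofReal_lt_iff_lt_toReal hsgn hAtop, ← hadef, hsum]
          linarith
        have := eventually_lt_of_lt_liminf (lt_of_lt_of_le hlt hA)
        filter_upwards [this] with n hn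
        calc ((r + B + ε : ℝ) : EReal)
            = ((ENNReal.ofReal (r + B + ε) : ℝ≥0∞) : EReal) := by
              rw [EReal.coe_ennreal_ofReal, max_eq_left hsgn]
          _ ≤ _ := EReal.coe_ennreal_le_coe_ennreal_iff.mpr hn.le
    filter_upwards [hev_B, hev_A] with n h1 h2
    rw [hlogeq]
    refine lt_of_lt_of_le hyr ?_
    calc (r : EReal) = ((r + B + ε : ℝ) : EReal) - ((B + ε : ℝ) : EReal) := by
          rw [← EReal.coe_sub]; norm_num
      _ ≤ _ := EReal.sub_le_sub h2 (EReal.coe_le_coe_iff.mpr (by rw [hBeq]; exact h1))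

/-- **Principle of descent for measures with unbounded supports.** If `(μ_n)` is a
log-tight sequence of finite positive measures on `ℂ` converging weak-* to a finite
measure `μ`, then `V^μ(z) ≤ liminf_n V^{μ_n}(z)` for every `z`, and more generally
`V^μ(z*) ≤ liminf_n V^{μ_n}(z_n)` whenever `z_n → z*`. -/
theorem principle_of_descent_unbounded
    (μseq : ℕ → Measure ℂ) (hfin : ∀ n, IsFiniteMeasure (μseq n))
    (hlogtight : ∀ ε : ℝ, 0 < ε → ∃ K : Set ℂ, IsCompact K ∧ ∀ n,
      (∫⁻ t in Kᶜ, ENNReal.ofReal (Real.log (1 + ‖t‖)) ∂(μseq n))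
        ≤ ENNReal.ofReal ε)
    (μ : Measure ℂ) [IsFiniteMeasure μ]
    (hweak : ∀ f : ℂ → ℝ, Continuous f → HasCompactSupport f →
      Tendsto (fun n => ∫ t, f t ∂(μseq n)) atTop (nhds (∫ t, f t ∂μ)))
    (zseq : ℕ → ℂ) (zstar : ℂ) (hz : Tendsto zseq atTop (nhds zstar)) :
    (∀ z : ℂ, logPot μ z ≤ liminf (fun n => logPot (μseq n) z) atTop) ∧
    logPot μ zstar ≤ liminf (fun n => logPot (μseq n) (zseq n)) atTop := by
  constructor
  · intro z
    exact des_main μseq μ hfin hlogtight hweak (w := fun _ => z) (wstar := z) tendsto_const_nhds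
  · exact des_main μseq μ hfin hlogtight hweak hz
end

section
/- Let μ be a finite positive Borel measure on ℝ, absolutely continuous with respect to Lebesgue measure with a continuous density f satisfying 0 ≤ f(x) ≤ M·(1 + |x|)^{−3/2} for all x ∈ ℝ and some constant M > 0. Then: (i) μ integrates the logarithm at infinity, i.e., ∫ log(1 + |x|) dμ(x) < ∞; (ii) there is a constant C such that |V^μ(x)| ≤ μ(ℝ)·log(1 + |x|) + C for all x ∈ ℝ; (iii) the logarithmic energy I(μ) = ∫ V^μ dμ is finite. -/
open MeasureTheory Real
open scoped ENNReal



lemma aux_rpow : IntegrableOn (fun u : ℝ => u ^ (-(1:ℝ)/2)) (Set.Ioo (0:ℝ) 1) volume := by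
  rw [intervalIntegral.integrableOn_Ioo_rpow_iff one_pos]
  norm_num

lemma aux_log_half : ∀ u : ℝ, u ∈ Set.Ioo (0:ℝ) 1 → abs (Real.log |u|) ≤ 2 * u ^ (-(1:ℝ)/2) := by
  intro u hu
  have h0 : 0 < u := hu.1
  have h1 : u < 1 := hu.2
  have hr : (0:ℝ) < u ^ (-(1:ℝ)/2) := rpow_pos_of_pos h0 _
  have hlog : Real.log (u ^ (-(1:ℝ)/2)) = (-(1:ℝ)/2) * Real.log u := Real.log_rpow h0 _
  have hle := Real.log_le_sub_one_of_pos hr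
  have habs : abs (Real.log |u|) = -Real.log u := by
    rw [abs_of_pos h0, abs_of_nonpos (Real.log_nonpos h0.le h1.le)]
  rw [habs]
  nlinarith [hle, hlog]

lemma aux_log_int : IntegrableOn (fun u : ℝ => abs (Real.log |u|)) (Set.Ioo (0:ℝ) 1) volume := by
  refine (aux_rpow.const_mul 2).mono' ?_ ?_
  · exact ((Real.measurable_log.comp measurable_abs).abs).aestronglyMeasurable
  · filter_upwards [ae_restrict_mem measurableSet_Ioo] with u hu
    rw [Real.norm_eq_abs, abs_abs]
    exact aux_log_half u hu

noncomputable def bfun : ℝ → ℝ := Set.indicator (Set.Ioo (-1:ℝ) 1) (fun u => abs (Real.log |u|))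

lemma bfun_nonneg (u : ℝ) : 0 ≤ bfun u :=
  Set.indicator_nonneg (fun x _ => abs_nonneg _) u

lemma bfun_meas : Measurable bfun :=
  ((Real.measurable_log.comp measurable_abs).abs).indicator measurableSet_Ioo

lemma bfun_integrable : Integrable bfun volume := by
  set F : ℝ → ℝ := Set.indicator (Set.Ioo (0:ℝ) 1) (fun u => abs (Real.log |u|)) with hF
  have hFint : Integrable F volume :=
    (integrable_indicator_iff measurableSet_Ioo).2 aux_log_int
  have hFneg : Integrable (fun u => F (-u)) volume := hFint.comp_neg
  refine ((hFneg.add hFint)).mono' bfun_meas.aestronglyMeasurable (ae_of_all _ ?_)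
  intro u
  rw [Real.norm_eq_abs, abs_of_nonneg (bfun_nonneg u)]
  have hFnn : ∀ v : ℝ, 0 ≤ F v := fun v => Set.indicator_nonneg (fun x _ => abs_nonneg _) v
  by_cases hu : u ∈ Set.Ioo (-1:ℝ) 1
  · rw [bfun, Set.indicator_of_mem hu]
    rcases lt_trichotomy u 0 with h | h | h
    · have : -u ∈ Set.Ioo (0:ℝ) 1 := ⟨by linarith, by linarith [hu.1]⟩
      have heq : F (-u) = abs (Real.log |(-u)|) := Set.indicator_of_mem this _
      simp only [Pi.add_apply]
      rw [heq, abs_neg]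
      linarith [hFnn u]
    · simp only [Pi.add_apply, h]
      simpa using add_nonneg (hFnn (-(0:ℝ))) (hFnn (0:ℝ))
    · have : u ∈ Set.Ioo (0:ℝ) 1 := ⟨h, hu.2⟩
      have heq : F u = abs (Real.log |u|) := Set.indicator_of_mem this _
      simp only [Pi.add_apply]
      rw [heq]
      linarith [hFnn (-u)]
  · rw [bfun, Set.indicator_of_notMem hu]
    exact add_nonneg (hFnn _) (hFnn _)

lemma key_bound (x t : ℝ) :
    abs (Real.log |x - t|) ≤ Real.log (1 + |x|) + Real.log (1 + |t|) + bfun (t - x) := by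
  have hLx : 0 ≤ Real.log (1 + |x|) := Real.log_nonneg (by simp [abs_nonneg])
  have hLt : 0 ≤ Real.log (1 + |t|) := Real.log_nonneg (by simp [abs_nonneg])
  rcases lt_or_ge |x - t| 1 with h | h
  · have hmem : t - x ∈ Set.Ioo (-1:ℝ) 1 := by
      constructor <;> [skip; skip] <;> cases' abs_lt.1 (by rwa [abs_sub_comm] at h) with h1 h2 <;> linarith
    have : bfun (t - x) = abs (Real.log |t - x|) := Set.indicator_of_mem hmem _
    rw [this, abs_sub_comm t x]
    linarith
  · have hpos : (0:ℝ) < |x - t| := lt_of_lt_of_le one_pos h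
    have hlog0 : 0 ≤ Real.log |x - t| := Real.log_nonneg h
    rw [abs_of_nonneg hlog0]
    have hle : |x - t| ≤ (1 + |x|) * (1 + |t|) := by
      have := abs_sub x t
      nlinarith [abs_nonneg x, abs_nonneg t, abs_sub_abs_le_abs_sub x t, abs_sub x t]
    have : Real.log |x - t| ≤ Real.log ((1 + |x|) * (1 + |t|)) :=
      Real.log_le_log hpos hle
    rw [Real.log_mul (by positivity) (by positivity)] at this
    linarith [bfun_nonneg (t - x)]

/-- The logarithmic potential of a measure on `ℝ`. -/
noncomputable def logPotR (μ : Measure ℝ) (x : ℝ) : ℝ :=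
  ∫ t, Real.log (1 / |x - t|) ∂μ

/-- **Finite energy for measures with density decaying like `|x|^{−3/2}`.** If `μ` has
a continuous Lebesgue density `f` with `0 ≤ f(x) ≤ M (1 + |x|)^{−3/2}`, then:
(i) `μ` integrates the logarithm at infinity; (ii) `|V^μ(x)| ≤ μ(ℝ) log(1+|x|) + C`
for some constant `C`; (iii) the logarithmic energy `I(μ) = ∫ V^μ dμ` is finite. -/
theorem finite_energy_of_decaying_density
    (f : ℝ → ℝ) (hf : Continuous f) (M : ℝ) (hM : 0 < M)
    (hf0 : ∀ x, 0 ≤ f x)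
    (hfM : ∀ x, f x ≤ M * (1 + |x|) ^ (-(3 : ℝ) / 2))
    (μ : Measure ℝ) (hμ : μ = volume.withDensity (fun x => ENNReal.ofReal (f x)))
    (hfin : IsFiniteMeasure μ) :
    Integrable (fun x => Real.log (1 + |x|)) μ ∧
    (∃ C : ℝ, ∀ x : ℝ,
      |logPotR μ x| ≤ (μ Set.univ).toReal * Real.log (1 + |x|) + C) ∧
    Integrable (fun p : ℝ × ℝ => Real.log |p.1 - p.2|) (μ.prod μ) ∧
    (∫ p : ℝ × ℝ, Real.log (1 / |p.1 - p.2|) ∂(μ.prod μ)) = ∫ x, logPotR μ x ∂μ := by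
  have hiff : ∀ g : ℝ → ℝ, Integrable g μ ↔ Integrable (fun x => g x * f x) volume := by
    intro g
    rw [hμ, integrable_withDensity_iff (hf.measurable.ennreal_ofReal)
        (Filter.Eventually.of_forall fun x => ENNReal.ofReal_lt_top)]
    simp_rw [ENNReal.toReal_ofReal (hf0 _)]
  have hint_eq : ∀ g : ℝ → ℝ, ∫ t, g t ∂μ = ∫ t, g t * f t := by
    intro g
    rw [hμ]
    have h0 : (fun x => ENNReal.ofReal (f x)) = (fun x => ((f x).toNNReal : ℝ≥0∞)) := rfl
    rw [h0, integral_withDensity_eq_integral_smul hf.measurable.real_toNNReal g]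
    congr 1; ext t; rw [NNReal.smul_def, Real.coe_toNNReal _ (hf0 t), smul_eq_mul]; ring
  have hLcont : Continuous (fun x : ℝ => Real.log (1 + |x|)) :=
    (continuous_const.add continuous_abs).log (fun x => (by positivity : (0:ℝ) < 1 + |x|).ne')
  have hLnn : ∀ x : ℝ, 0 ≤ Real.log (1 + |x|) :=
    fun x => Real.log_nonneg (by simp [abs_nonneg])
  have hL : Integrable (fun x : ℝ => Real.log (1 + |x|)) μ := by
    rw [hiff]
    have hmaj : Integrable (fun x : ℝ => 4 * M * ((1 + ‖x‖) ^ (-((5:ℝ)/4)))) volume := by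
      exact (integrable_one_add_norm (by norm_num)).const_mul (4 * M)
    refine hmaj.mono' (hLcont.mul hf).aestronglyMeasurable
      (Filter.Eventually.of_forall fun x => ?_)
    have h1 : (0:ℝ) < 1 + |x| := by positivity
    have hq : Real.log (1 + |x|) ≤ 4 * (1 + |x|) ^ ((1:ℝ)/4) := by
      have hp : (0:ℝ) < (1 + |x|) ^ ((1:ℝ)/4) := Real.rpow_pos_of_pos h1 _
      have h2 := Real.log_le_sub_one_of_pos hp
      have h3 : Real.log ((1 + |x|) ^ ((1:ℝ)/4)) = ((1:ℝ)/4) * Real.log (1 + |x|) :=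
        Real.log_rpow h1 _
      nlinarith
    have hrw : (1 + |x|) ^ ((1:ℝ)/4) * (1 + |x|) ^ (-(3:ℝ)/2) = (1 + |x|) ^ (-((5:ℝ)/4)) := by
      rw [← Real.rpow_add h1]; norm_num
    calc ‖Real.log (1 + |x|) * f x‖ = Real.log (1 + |x|) * f x := by
          rw [Real.norm_eq_abs, abs_of_nonneg (mul_nonneg (hLnn x) (hf0 x))]
      _ ≤ (4 * (1 + |x|) ^ ((1:ℝ)/4)) * (M * (1 + |x|) ^ (-(3:ℝ)/2)) :=
          mul_le_mul hq (hfM x) (hf0 x) (by positivity)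
      _ = 4 * M * ((1 + |x|) ^ ((1:ℝ)/4) * (1 + |x|) ^ (-(3:ℝ)/2)) := by ring
      _ = 4 * M * ((1 + ‖x‖) ^ (-((5:ℝ)/4))) := by rw [hrw, Real.norm_eq_abs]
  haveI := hfin
  have fbound : ∀ t, f t ≤ M := by
    intro t
    refine (hfM t).trans ?_
    have h1 : (1 + |t|) ^ (-(3:ℝ)/2) ≤ 1 :=
      Real.rpow_le_one_of_one_le_of_nonpos (by simp [abs_nonneg]) (by norm_num)
    nlinarith
  have hbshift_vol : ∀ x : ℝ, Integrable (fun t => bfun (t - x)) volume :=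
    fun x => bfun_integrable.comp_sub_right x
  have hbshift_mul : ∀ x : ℝ, Integrable (fun t => bfun (t - x) * f t) volume := by
    intro x
    refine ((hbshift_vol x).mul_const M).mono'
      (((bfun_meas.comp (measurable_id.sub measurable_const)).mul hf.measurable).aestronglyMeasurable)
      (Filter.Eventually.of_forall fun t => ?_)
    rw [Real.norm_eq_abs, abs_of_nonneg (mul_nonneg (bfun_nonneg _) (hf0 t))]
    exact mul_le_mul_of_nonneg_left (fbound t) (bfun_nonneg _)
  have hbshift_int : ∀ x : ℝ, Integrable (fun t => bfun (t - x)) μ :=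
    fun x => (hiff _).2 (hbshift_mul x)
  set K := ∫ u, bfun u with hK
  have hbshift_integral : ∀ x : ℝ, ∫ t, bfun (t - x) ∂μ ≤ M * K := by
    intro x
    rw [hint_eq]
    have h1 : ∫ t, bfun (t - x) * f t ≤ ∫ t, bfun (t - x) * M :=
      integral_mono (hbshift_mul x) ((hbshift_vol x).mul_const M)
        (fun t => mul_le_mul_of_nonneg_left (fbound t) (bfun_nonneg _))
    have h2 : ∫ t, bfun (t - x) * M = (∫ t, bfun (t - x)) * M := integral_mul_const M _
    have h3 : ∫ t, bfun (t - x) = K := by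
      rw [hK]; exact integral_sub_right_eq_self bfun x
    rw [h2, h3] at h1
    linarith
  set μr := (μ Set.univ).toReal with hμr
  set C0 := ∫ t, Real.log (1 + |t|) ∂μ with hC0
  have core : ∀ x : ℝ, Integrable (fun t => Real.log |x - t|) μ ∧
      ∫ t, abs (Real.log |x - t|) ∂μ ≤ μr * Real.log (1 + |x|) + (C0 + M * K) := by
    intro x
    have hmeas : AEStronglyMeasurable (fun t => Real.log |x - t|) μ :=
      (Real.measurable_log.comp ((measurable_const.sub measurable_id).abs)).aestronglyMeasurable
    have hmaj : Integrable (fun t => Real.log (1 + |x|) + Real.log (1 + |t|) + bfun (t - x)) μ :=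
      ((integrable_const _).add hL).add (hbshift_int x)
    have hptw : ∀ t, ‖Real.log |x - t|‖ ≤
        Real.log (1 + |x|) + Real.log (1 + |t|) + bfun (t - x) := fun t => by
      rw [Real.norm_eq_abs]; exact key_bound x t
    have hint : Integrable (fun t => Real.log |x - t|) μ :=
      hmaj.mono' hmeas (Filter.Eventually.of_forall hptw)
    refine ⟨hint, ?_⟩
    have h1 : ∫ t, abs (Real.log |x - t|) ∂μ ≤
        ∫ t, (Real.log (1 + |x|) + Real.log (1 + |t|) + bfun (t - x)) ∂μ :=
      integral_mono hint.abs hmaj (fun t => by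
        simpa [Real.norm_eq_abs] using hptw t)
    have h2 : ∫ t, (Real.log (1 + |x|) + Real.log (1 + |t|) + bfun (t - x)) ∂μ
        = μr * Real.log (1 + |x|) + C0 + ∫ t, bfun (t - x) ∂μ := by
      have ha : Integrable (fun t : ℝ => Real.log (1 + |x|) + Real.log (1 + |t|)) μ :=
        (integrable_const _).add hL
      rw [integral_add ha (hbshift_int x),
        integral_add (integrable_const (Real.log (1 + |x|))) hL, integral_const]
      simp [smul_eq_mul, hμr, hC0, Measure.real]
    rw [h2] at h1
    linarith [hbshift_integral x]
  have part1 : Integrable (fun x : ℝ => Real.log (1 + |x|)) μ := hL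
  have part2 : ∃ C : ℝ, ∀ x : ℝ,
      |logPotR μ x| ≤ (μ Set.univ).toReal * Real.log (1 + |x|) + C := by
    refine ⟨C0 + M * K, fun x => ?_⟩
    have h1 : ‖∫ t, Real.log (1 / |x - t|) ∂μ‖ ≤ ∫ t, ‖Real.log (1 / |x - t|)‖ ∂μ :=
      norm_integral_le_integral_norm _
    have h2 : ∫ t, ‖Real.log (1 / |x - t|)‖ ∂μ = ∫ t, abs (Real.log |x - t|) ∂μ := by
      congr 1; ext t
      rw [Real.norm_eq_abs, one_div, Real.log_inv, abs_neg]
    rw [h2] at h1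
    calc |logPotR μ x| ≤ ∫ t, abs (Real.log |x - t|) ∂μ := by
          simpa [logPotR, Real.norm_eq_abs] using h1
      _ ≤ μr * Real.log (1 + |x|) + (C0 + M * K) := (core x).2
  have hmeasP : AEStronglyMeasurable (fun p : ℝ × ℝ => Real.log |p.1 - p.2|) (μ.prod μ) :=
    (Real.measurable_log.comp ((measurable_fst.sub measurable_snd).abs)).aestronglyMeasurable
  have part3 : Integrable (fun p : ℝ × ℝ => Real.log |p.1 - p.2|) (μ.prod μ) := by
    refine (integrable_prod_iff hmeasP).2 ⟨Filter.Eventually.of_forall fun x => (core x).1, ?_⟩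
    have hmeasI : AEStronglyMeasurable (fun x => ∫ y, ‖Real.log |x - y|‖ ∂μ) μ :=
      hmeasP.norm.integral_prod_right'
    refine ((hL.const_mul μr).add (integrable_const (C0 + M * K))).mono' hmeasI
      (Filter.Eventually.of_forall fun x => ?_)
    rw [Real.norm_eq_abs, abs_of_nonneg (integral_nonneg fun y => norm_nonneg _)]
    calc ∫ y, ‖Real.log |x - y|‖ ∂μ = ∫ y, abs (Real.log |x - y|) ∂μ := by
          simp only [Real.norm_eq_abs]
      _ ≤ μr * Real.log (1 + |x|) + (C0 + M * K) := (core x).2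
  have part4 : (∫ p : ℝ × ℝ, Real.log (1 / |p.1 - p.2|) ∂(μ.prod μ)) = ∫ x, logPotR μ x ∂μ := by
    have h4 : Integrable (fun p : ℝ × ℝ => Real.log (1 / |p.1 - p.2|)) (μ.prod μ) := by
      have hfun : (fun p : ℝ × ℝ => Real.log (1 / |p.1 - p.2|))
          = (fun p : ℝ × ℝ => -(Real.log |p.1 - p.2|)) := by
        funext p; rw [one_div, Real.log_inv]
      rw [hfun]; exact part3.neg
    simpa [logPotR] using integral_prod _ h4
  exact ⟨part1, part2, part3, part4⟩
end

section
/- Let β₁, β₂ > 0, z₁ = −1 + β₁·i, z₂ = 1 + β₂·i, x₀ = (β₂² − β₁²)/4, and x₂ = x₀ + (1/4)√((β₂² − β₁²)² + 8(β₁² + β₂² + 2)). Then the constant Γ₁ = (1/(2β₁β₂))((β₁² + β₂² + 4) − √((β₁² + β₂² + 4)² − 4β₁²β₂²)) satisfies the identity Γ₁ = (β₁/β₂)·|z₂ − x₂|²/|z₁ − x₂|², i.e., Γ₁ = (β₁/β₂)·((1 − x₂)² + β₂²)/((1 + x₂)² + β₁²). -/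
open Real

/-- **Alternative expression for the first transition value `Γ₁`.** With
`z₁ = −1 + β₁ i`, `z₂ = 1 + β₂ i`, `x₀ = (β₂² − β₁²)/4` and
`x₂ = x₀ + (1/4)√((β₂² − β₁²)² + 8(β₁² + β₂² + 2))`, the constant
`Γ₁ = (1/(2β₁β₂))((β₁² + β₂² + 4) − √((β₁² + β₂² + 4)² − 4β₁²β₂²))` satisfies
`Γ₁ = (β₁/β₂)·|z₂ − x₂|²/|z₁ − x₂|² = (β₁/β₂)·((1 − x₂)² + β₂²)/((1 + x₂)² + β₁²)`. -/
theorem gamma_one_identity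
    (β₁ β₂ : ℝ) (hβ₁ : 0 < β₁) (hβ₂ : 0 < β₂)
    (z₁ z₂ : ℂ) (hz₁ : z₁ = -1 + (β₁ : ℂ) * Complex.I)
    (hz₂ : z₂ = 1 + (β₂ : ℂ) * Complex.I)
    (x₀ x₂ : ℝ) (hx₀ : x₀ = (β₂ ^ 2 - β₁ ^ 2) / 4)
    (hx₂ : x₂ = x₀ + (1 / 4) *
      Real.sqrt ((β₂ ^ 2 - β₁ ^ 2) ^ 2 + 8 * (β₁ ^ 2 + β₂ ^ 2 + 2)))
    (Γ₁ : ℝ)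
    (hΓ₁ : Γ₁ = (1 / (2 * β₁ * β₂)) * ((β₁ ^ 2 + β₂ ^ 2 + 4)
      - Real.sqrt ((β₁ ^ 2 + β₂ ^ 2 + 4) ^ 2 - 4 * β₁ ^ 2 * β₂ ^ 2))) :
    Γ₁ = (β₁ / β₂) * ‖z₂ - (x₂ : ℂ)‖ ^ 2 / ‖z₁ - (x₂ : ℂ)‖ ^ 2
    ∧ Γ₁ = (β₁ / β₂) * ((1 - x₂) ^ 2 + β₂ ^ 2) / ((1 + x₂) ^ 2 + β₁ ^ 2) := by
  have hDeq : (β₁ ^ 2 + β₂ ^ 2 + 4) ^ 2 - 4 * β₁ ^ 2 * β₂ ^ 2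
      = (β₂ ^ 2 - β₁ ^ 2) ^ 2 + 8 * (β₁ ^ 2 + β₂ ^ 2 + 2) := by ring
  set s := Real.sqrt ((β₂ ^ 2 - β₁ ^ 2) ^ 2 + 8 * (β₁ ^ 2 + β₂ ^ 2 + 2)) with hs
  have hDnn : (0:ℝ) ≤ (β₂ ^ 2 - β₁ ^ 2) ^ 2 + 8 * (β₁ ^ 2 + β₂ ^ 2 + 2) := by positivity
  have hs2 : s ^ 2 = (β₂ ^ 2 - β₁ ^ 2) ^ 2 + 8 * (β₁ ^ 2 + β₂ ^ 2 + 2) :=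
    Real.sq_sqrt hDnn
  have hΓ₁' : Γ₁ = (1 / (2 * β₁ * β₂)) * ((β₁ ^ 2 + β₂ ^ 2 + 4) - s) := by
    rw [hΓ₁, hDeq]
  have hden : (0:ℝ) < (1 + x₂) ^ 2 + β₁ ^ 2 := by positivity
  have key : Γ₁ = (β₁ / β₂) * ((1 - x₂) ^ 2 + β₂ ^ 2) / ((1 + x₂) ^ 2 + β₁ ^ 2) := by
    rw [hΓ₁', hx₂, hx₀]
    rw [hx₂, hx₀] at hden
    field_simp
    linear_combination (β₁ ^ 2 - β₂ ^ 2 - 4 - s) * hs2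
  refine ⟨?_, key⟩
  rw [key]
  congr 2
  · rw [hz₂]
    rw [show (1 : ℂ) + (β₂ : ℂ) * Complex.I - (x₂ : ℂ)
        = Complex.mk (1 - x₂) β₂ by
      apply Complex.ext <;> simp [Complex.ext_iff]]
    rw [Complex.sq_norm]
    simp [Complex.normSq_mk]
    ring
  · rw [hz₁]
    rw [show (-1 : ℂ) + (β₁ : ℂ) * Complex.I - (x₂ : ℂ)
        = Complex.mk (-1 - x₂) β₁ by
      apply Complex.ext <;> simp [Complex.ext_iff]]
    rw [Complex.sq_norm]
    simp [Complex.normSq_mk]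
    ring
end

section
/- Let β₁, β₂ > 0, z₁ = −1 + β₁·i, z₂ = 1 + β₂·i, x₀ = (β₂² − β₁²)/4, x₂ = x₀ + (1/4)√((β₂² − β₁²)² + 8(β₁² + β₂² + 2)), Γ₁ = (1/(2β₁β₂))((β₁² + β₂² + 4) − √((β₁² + β₂² + 4)² − 4β₁²β₂²)), and Γ₂ = (β₁/β₂)·|z₂ − x₂|/|z₁ − x₂|. Then 0 < Γ₁ < Γ₂ < min(1, β₁/β₂); in particular β₁·|z₂ − x₂| < β₂·|z₁ − x₂| and |z₂ − x₂| < |z₁ − x₂|. -/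
open Real

set_option maxHeartbeats 1000000

lemma key_er (e s' r : ℝ) (he' : |e| < s') (hr : 0 ≤ r)
    (hr2 : r ^ 2 = e ^ 2 + 8 * s' + 16) : e * r < e ^ 2 + 4 * s' := by
  have hs0 : 0 < s' := lt_of_le_of_lt (abs_nonneg e) he'
  have he1 : e < s' := lt_of_abs_lt he'
  have he2 : -s' < e := neg_lt_of_abs_lt he'
  rcases le_or_gt e 0 with he | he
  · nlinarith [mul_nonpos_of_nonpos_of_nonneg he hr]
  · have h1 : 0 < e * r + (e ^ 2 + 4 * s') := by positivity
    have h2 : 0 < (s' - e) * (s' + e) := by nlinarith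
    have hr2' : e ^ 2 * r ^ 2 = e ^ 2 * (e ^ 2 + 8 * s' + 16) := by rw [hr2]
    nlinarith [hr2', h2, h1]

lemma key_er' (p q r : ℝ) (hp : 0 < p) (hq : 0 < q) (hr : 0 ≤ r)
    (hr2 : r ^ 2 = (q - p) ^ 2 + 8 * (p + q + 2)) :
    (p - q) * r < (p - q) ^ 2 + 4 * (p + q) := by
  have habs : |p - q| < p + q := by rw [abs_lt]; constructor <;> nlinarith
  exact key_er _ _ _ habs hr (by rw [hr2]; ring)

lemma xpos_lem (p q x r : ℝ) (hp : 0 < p) (hq : 0 < q) (hr0 : 0 ≤ r)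
    (hr2 : r ^ 2 = (q - p) ^ 2 + 8 * (p + q + 2)) (hx4 : 4 * x = (q - p) + r) :
    0 < x := by
  have hrd : r - (q - p) > 0 := by nlinarith [sq_nonneg (r - (q - p))]
  have h8 : (r - (q - p)) * (r + (q - p)) = 8 * (p + q + 2) := by linear_combination hr2
  nlinarith [h8, hrd]

lemma quad_lem (p q x r : ℝ)
    (hr2 : r ^ 2 = (q - p) ^ 2 + 8 * (p + q + 2)) (hx4 : 4 * x = (q - p) + r) :
    2 * x ^ 2 = (q - p) * x + (p + q + 2) := by
  have h16 : 16 * x ^ 2 = ((q - p) + r) ^ 2 := by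
    rw [show (16:ℝ) * x ^ 2 = (4 * x) ^ 2 by ring, hx4]
  linear_combination (1/8) * h16 - ((q - p)/4) * hx4 + (1/8) * hr2

lemma ii_lem (p q x r : ℝ) (hp : 0 < p) (hq : 0 < q) (hr0 : 0 ≤ r)
    (hr2 : r ^ 2 = (q - p) ^ 2 + 8 * (p + q + 2)) (hx4 : 4 * x = (q - p) + r) :
    0 < (q - p) * (1 + x ^ 2) + 2 * (p + q) * x := by
  have hrpos : 0 < r := by nlinarith [sq_nonneg (q - p)]
  have hkey := key_er' p q r hp hq hr0 hr2
  have hrk := mul_lt_mul_of_pos_left hkey hrpos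
  have her2 : (p - q) * r ^ 2 = (p - q) * ((q - p) ^ 2 + 8 * (p + q + 2)) := by rw [hr2]
  have h16 : 16 * x ^ 2 = ((q - p) + r) ^ 2 := by
    rw [show (16:ℝ) * x ^ 2 = (4 * x) ^ 2 by ring, hx4]
  nlinarith [hrk, her2, h16, hx4]

lemma G_lem (p q x r : ℝ) (hp : 0 < p) (hq : 0 < q) (hr0 : 0 ≤ r)
    (hr2 : r ^ 2 = (q - p) ^ 2 + 8 * (p + q + 2)) (hx4 : 4 * x = (q - p) + r) :
    0 < (p + q + 4) * (x ^ 2 - 1) + p * q := by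
  have hkey := key_er' p q r hp hq hr0 hr2
  have he4x : (p - q) * (4 * x) = (p - q) * ((q - p) + r) := by rw [hx4]
  have hex : (p - q) * x < p + q := by nlinarith [he4x, hkey]
  have hquad := quad_lem p q x r hr2 hx4
  have hSex := mul_lt_mul_of_pos_left hex (show (0:ℝ) < p + q + 4 by positivity)
  nlinarith [hSex, hquad, mul_pos hp hq]

lemma sq_comp (a b : ℝ) (hb : 0 ≤ b) (h : a ^ 2 < b ^ 2) : a < b :=
  lt_of_pow_lt_pow_left₀ 2 hb h

lemma Apos_lem (c p A : ℝ) (hp : 0 < p) (hA2 : A ^ 2 = c ^ 2 + p) (hAnn : 0 ≤ A) :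
    0 < A := by
  rcases hAnn.lt_or_eq with h | h
  · exact h
  · exfalso; nlinarith [sq_nonneg c]

lemma BA2_lem (p q x r A B : ℝ) (hA2 : A ^ 2 = (1 + x) ^ 2 + p)
    (hB2 : B ^ 2 = (1 - x) ^ 2 + q) (hx4 : 4 * x = (q - p) + r) (hr : 0 < r) :
    B ^ 2 < A ^ 2 := by nlinarith

lemma ii2_lem (p q x A B : ℝ) (h0 : 0 < (q - p) * (1 + x ^ 2) + 2 * (p + q) * x)
    (hA2 : A ^ 2 = (1 + x) ^ 2 + p) (hB2 : B ^ 2 = (1 - x) ^ 2 + q) :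
    p * B ^ 2 < q * A ^ 2 := by nlinarith

lemma S4_lem (p q : ℝ) (hp : 0 < p) (hq : 0 < q) :
    0 < (p + q + 4) ^ 2 - 4 * p * q := by nlinarith [sq_nonneg (p - q)]

lemma coreAB_lem (p q x A B : ℝ) (hp : 0 < p) (hq : 0 < q)
    (hA2 : A ^ 2 = (1 + x) ^ 2 + p) (hB2 : B ^ 2 = (1 - x) ^ 2 + q)
    (hAnn : 0 ≤ A) (hBnn : 0 ≤ B)
    (hquad : 2 * x ^ 2 = (q - p) * x + (p + q + 2))
    (hG : 0 < (p + q + 4) * (x ^ 2 - 1) + p * q) :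
    q * A ^ 2 + p * B ^ 2 < (p + q + 4) * (A * B) := by
  have hQ : q * A ^ 2 + p * B ^ 2 = (p + q + 4) * (x ^ 2 - 1) + 2 * (p * q) := by
    linear_combination q * hA2 + p * hB2 - 2 * hquad
  have hUV : A ^ 2 * B ^ 2 = (x ^ 2 - 1) ^ 2 + (p + q + 4) * (x ^ 2 - 1) + p * q := by
    linear_combination B ^ 2 * hA2 + ((1 + x) ^ 2 + p) * hB2 - 2 * hquad
  have hS4 := S4_lem p q hp hq
  have hRHSpos : 0 < (p + q + 4) * (x ^ 2 - 1) + 2 * (p * q) := by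
    nlinarith [mul_pos hp hq]
  have hsq : ((p + q + 4) * (x ^ 2 - 1) + 2 * (p * q)) ^ 2 < ((p + q + 4) * (A * B)) ^ 2 := by
    nlinarith [hUV, mul_pos hS4 hG]
  have := sq_comp _ _ (by positivity : (0:ℝ) ≤ (p + q + 4) * (A * B)) hsq
  linarith [hQ ▸ this]

lemma key6_lem (p q A B s : ℝ) (hp : 0 < p) (hq : 0 < q)
    (hApos : 0 < A) (hBpos : 0 < B) (hspos : 0 < s)
    (hs2 : s ^ 2 = (p + q + 4) ^ 2 - 4 * p * q)
    (hcore : q * A ^ 2 + p * B ^ 2 < (p + q + 4) * (A * B)) :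
    A * ((p + q + 4) - s) < 2 * p * B := by
  rcases le_or_gt (A * (p + q + 4) - 2 * p * B) 0 with h | h
  · nlinarith [mul_pos hspos hApos]
  · have hs2A : s ^ 2 * A ^ 2 = ((p + q + 4) ^ 2 - 4 * p * q) * A ^ 2 := by rw [hs2]
    have hsq6 : (A * (p + q + 4) - 2 * p * B) ^ 2 < (s * A) ^ 2 := by
      nlinarith [hs2A, mul_pos hp (sub_pos.mpr hcore)]
    nlinarith [sq_comp _ _ (mul_pos hspos hApos).le hsq6]

lemma gam12_lem (b1 b2 S s A B : ℝ) (hb1 : 0 < b1) (hb2 : 0 < b2) (hA : 0 < A)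
    (h : A * (S - s) < 2 * b1 ^ 2 * B) :
    1 / (2 * b1 * b2) * (S - s) < b1 / b2 * B / A := by
  have e1 : 1 / (2 * b1 * b2) * (S - s) = (S - s) / (2 * b1 * b2) := by ring
  have e2 : b1 / b2 * B / A = (b1 * B) / (b2 * A) := by
    rw [div_mul_eq_mul_div, div_div]
  rw [e1, e2, div_lt_div_iff₀ (by positivity) (by positivity)]
  nlinarith [mul_lt_mul_of_pos_left h hb2]

lemma gam21_lem (b1 b2 A B : ℝ) (hb2 : 0 < b2) (hA : 0 < A)
    (h : b1 * B < b2 * A) : b1 / b2 * B / A < 1 := by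
  rw [div_lt_one hA, div_mul_eq_mul_div, div_lt_iff₀ hb2]
  linarith

lemma gam2b_lem (b1 b2 A B : ℝ) (hb1 : 0 < b1) (hb2 : 0 < b2) (hA : 0 < A)
    (hBA : B < A) : b1 / b2 * B / A < b1 / b2 := by
  rw [mul_div_assoc]
  exact mul_lt_of_lt_one_right (by positivity) ((div_lt_one hA).mpr hBA)


/-- **Ordering of the transition values:** `0 < Γ₁ < Γ₂ < min(1, β₁/β₂)`; in
particular `β₁ |z₂ − x₂| < β₂ |z₁ − x₂|` and `|z₂ − x₂| < |z₁ − x₂|`, where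
`z₁ = −1 + β₁ i`, `z₂ = 1 + β₂ i`,
`x₂ = (β₂² − β₁²)/4 + (1/4)√((β₂² − β₁²)² + 8(β₁² + β₂² + 2))`,
`Γ₁ = (1/(2β₁β₂))((β₁² + β₂² + 4) − √((β₁² + β₂² + 4)² − 4β₁²β₂²))` and
`Γ₂ = (β₁/β₂)·|z₂ − x₂|/|z₁ − x₂|`. -/
theorem gamma_ordering
    (β₁ β₂ : ℝ) (hβ₁ : 0 < β₁) (hβ₂ : 0 < β₂)
    (z₁ z₂ : ℂ) (hz₁ : z₁ = -1 + (β₁ : ℂ) * Complex.I)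
    (hz₂ : z₂ = 1 + (β₂ : ℂ) * Complex.I)
    (x₀ x₂ : ℝ) (hx₀ : x₀ = (β₂ ^ 2 - β₁ ^ 2) / 4)
    (hx₂ : x₂ = x₀ + (1 / 4) *
      Real.sqrt ((β₂ ^ 2 - β₁ ^ 2) ^ 2 + 8 * (β₁ ^ 2 + β₂ ^ 2 + 2)))
    (Γ₁ Γ₂ : ℝ)
    (hΓ₁ : Γ₁ = (1 / (2 * β₁ * β₂)) * ((β₁ ^ 2 + β₂ ^ 2 + 4)
      - Real.sqrt ((β₁ ^ 2 + β₂ ^ 2 + 4) ^ 2 - 4 * β₁ ^ 2 * β₂ ^ 2)))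
    (hΓ₂ : Γ₂ = (β₁ / β₂) * ‖z₂ - (x₂ : ℂ)‖ / ‖z₁ - (x₂ : ℂ)‖) :
    0 < Γ₁ ∧ Γ₁ < Γ₂ ∧ Γ₂ < min 1 (β₁ / β₂) ∧
    β₁ * ‖z₂ - (x₂ : ℂ)‖ < β₂ * ‖z₁ - (x₂ : ℂ)‖ ∧
    ‖z₂ - (x₂ : ℂ)‖ < ‖z₁ - (x₂ : ℂ)‖ := by
  have hp : 0 < β₁ ^ 2 := by positivity
  have hq : 0 < β₂ ^ 2 := by positivity
  set r : ℝ := Real.sqrt ((β₂ ^ 2 - β₁ ^ 2) ^ 2 + 8 * (β₁ ^ 2 + β₂ ^ 2 + 2)) with hrdef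
  have hr0 : 0 ≤ r := Real.sqrt_nonneg _
  have hrpos : 0 < r := Real.sqrt_pos.mpr (by positivity)
  have hr2 : r ^ 2 = (β₂ ^ 2 - β₁ ^ 2) ^ 2 + 8 * (β₁ ^ 2 + β₂ ^ 2 + 2) :=
    Real.sq_sqrt (by positivity)
  have hx4 : 4 * x₂ = (β₂ ^ 2 - β₁ ^ 2) + r := by rw [hx₂, hx₀]; ring
  have hx2pos : 0 < x₂ := xpos_lem _ _ _ _ hp hq hr0 hr2 hx4
  have hquad := quad_lem (β₁ ^ 2) (β₂ ^ 2) x₂ r hr2 hx4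
  have hii0 := ii_lem (β₁ ^ 2) (β₂ ^ 2) x₂ r hp hq hr0 hr2 hx4
  have hG := G_lem (β₁ ^ 2) (β₂ ^ 2) x₂ r hp hq hr0 hr2 hx4
  set A : ℝ := ‖z₁ - (x₂ : ℂ)‖ with hAdef
  set B : ℝ := ‖z₂ - (x₂ : ℂ)‖ with hBdef
  have hA2 : A ^ 2 = (1 + x₂) ^ 2 + β₁ ^ 2 := by
    rw [hAdef, Complex.sq_norm, hz₁, Complex.normSq_apply]; simp; ring
  have hB2 : B ^ 2 = (1 - x₂) ^ 2 + β₂ ^ 2 := by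
    rw [hBdef, Complex.sq_norm, hz₂, Complex.normSq_apply]; simp; ring
  have hAnn : 0 ≤ A := norm_nonneg _
  have hBnn : 0 ≤ B := norm_nonneg _
  have hApos : 0 < A := Apos_lem (1 + x₂) (β₁ ^ 2) A hp hA2 hAnn
  have hBpos : 0 < B := Apos_lem (1 - x₂) (β₂ ^ 2) B hq hB2 hBnn
  have hBA : B < A := sq_comp _ _ hAnn (BA2_lem _ _ _ _ _ _ hA2 hB2 hx4 hrpos)
  have hii : β₁ * B < β₂ * A := by
    apply sq_comp _ _ (by positivity)
    rw [mul_pow, mul_pow]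
    exact ii2_lem (β₁ ^ 2) (β₂ ^ 2) x₂ A B hii0 hA2 hB2
  have hcore := coreAB_lem (β₁ ^ 2) (β₂ ^ 2) x₂ A B hp hq hA2 hB2 hAnn hBnn hquad hG
  have hS4 := S4_lem (β₁ ^ 2) (β₂ ^ 2) hp hq
  set s : ℝ := Real.sqrt ((β₁ ^ 2 + β₂ ^ 2 + 4) ^ 2 - 4 * β₁ ^ 2 * β₂ ^ 2) with hsdef
  have hsnn : 0 ≤ s := Real.sqrt_nonneg _
  have hs2 : s ^ 2 = (β₁ ^ 2 + β₂ ^ 2 + 4) ^ 2 - 4 * β₁ ^ 2 * β₂ ^ 2 :=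
    Real.sq_sqrt (by linarith)
  have hspos : 0 < s := Real.sqrt_pos.mpr (by linarith)
  have hslt : s < β₁ ^ 2 + β₂ ^ 2 + 4 :=
    sq_comp s _ (by positivity) (by rw [hs2]; linarith [mul_pos hp hq])
  have hΓ₁pos : 0 < Γ₁ := by
    rw [hΓ₁]
    exact mul_pos (by positivity) (by linarith)
  have hkey6 : A * ((β₁ ^ 2 + β₂ ^ 2 + 4) - s) < 2 * β₁ ^ 2 * B :=
    key6_lem (β₁ ^ 2) (β₂ ^ 2) A B s hp hq hApos hBpos hspos
      (by linear_combination hs2) hcore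
  have hΓ₁₂ : Γ₁ < Γ₂ := by
    rw [hΓ₁, hΓ₂]
    exact gam12_lem β₁ β₂ _ _ A B hβ₁ hβ₂ hApos hkey6
  have hΓ₂1 : Γ₂ < 1 := by
    rw [hΓ₂]
    exact gam21_lem β₁ β₂ A B hβ₂ hApos hii
  have hΓ₂b : Γ₂ < β₁ / β₂ := by
    rw [hΓ₂]
    exact gam2b_lem β₁ β₂ A B hβ₁ hβ₂ hApos hBA
  exact ⟨hΓ₁pos, hΓ₁₂, lt_min hΓ₂1 hΓ₂b, hii, hBA⟩
end
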